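/- arXiv:2008.00225 — 12 statements merged into one kernel-verified Lean document; each statement's English description precedes it below -/
import Mathlib

section
/- For any graph G, γ_r(G) = γ(G) if and only if γ_s(G) = γ(G). -/
open Finset

variable {V : Type*}

/-- `S` is a dominating set of `G`. -/
def Dominating (G : SimpleGraph V) (S : Set V) : Prop :=
  ∀ v, v ∉ S → ∃ u ∈ S, G.Adj u v

/-- `S` is a secure dominating set of `G`. -/
def SecureDominating (G : SimpleGraph V) (S : Set V) : Prop :=
  Dominating G S ∧ ∀ v, v ∉ S → ∃ u ∈ S, G.Adj u v ∧ Dominating G ((S \ {u}) ∪ {v})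

/-- The domination number `γ(G)`. -/
noncomputable def domNum (G : SimpleGraph V) : ℕ :=
  sInf {n | ∃ S : Set V, Dominating G S ∧ S.ncard = n}

/-- The secure domination number `γ_s(G)`. -/
noncomputable def secDomNum (G : SimpleGraph V) : ℕ :=
  sInf {n | ∃ S : Set V, SecureDominating G S ∧ S.ncard = n}

/-- `v` is undefended with respect to the guard function `f`. -/
def Undefended (G : SimpleGraph V) (f : V → ℕ) (v : V) : Prop :=
  f v = 0 ∧ ∀ u, G.Adj u v → f u = 0

/-- `f` is a weak Roman dominating function on `G`. -/
def IsWRDF [DecidableEq V] (G : SimpleGraph V) (f : V → ℕ) : Prop :=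
  (∀ v, f v ≤ 2) ∧ ∀ v, f v = 0 → ∃ u, G.Adj u v ∧ 1 ≤ f u ∧
    ∀ w, ¬ Undefended G (Function.update (Function.update f u (f u - 1)) v 1) w

/-- The weak Roman domination number `γ_r(G)`. -/
noncomputable def weakRomanNum [Fintype V] [DecidableEq V] (G : SimpleGraph V) : ℕ :=
  sInf {n | ∃ f : V → ℕ, IsWRDF G f ∧ ∑ v, f v = n}

section AuxLemmas
set_option linter.unusedSectionVars false
variable [Fintype V] [DecidableEq V] (G : SimpleGraph V)

lemma aux_dominating_univ : Dominating G Set.univ := fun v hv => absurd (Set.mem_univ v) hv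

lemma aux_secure_univ : SecureDominating G Set.univ :=
  ⟨aux_dominating_univ G, fun v hv => absurd (Set.mem_univ v) hv⟩

lemma aux_domNum_le {S : Set V} (h : Dominating G S) : domNum G ≤ S.ncard :=
  Nat.sInf_le ⟨S, h, rfl⟩

lemma aux_secSet_nonempty : {n | ∃ S : Set V, SecureDominating G S ∧ S.ncard = n}.Nonempty :=
  ⟨_, Set.univ, aux_secure_univ G, rfl⟩

lemma aux_wrSet_nonempty : {n | ∃ f : V → ℕ, IsWRDF G f ∧ ∑ v, f v = n}.Nonempty :=
  ⟨_, fun _ => 1, ⟨fun _ => one_le_two, fun v hv => absurd hv one_ne_zero⟩, rfl⟩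

lemma aux_domNum_le_secDomNum : domNum G ≤ secDomNum G := by
  obtain ⟨S, hS, hc⟩ := Nat.sInf_mem (aux_secSet_nonempty G)
  calc domNum G ≤ S.ncard := aux_domNum_le G hS.1
    _ = secDomNum G := hc

lemma aux_indicator_sum (S : Set V) [DecidablePred (· ∈ S)] :
    ∑ v, (if v ∈ S then 1 else 0) = S.ncard := by
  rw [← Finset.card_filter, Set.ncard_eq_toFinset_card']
  congr 1
  ext x
  simp

/-- The support of a WRDF is dominating. -/
lemma aux_support_dom {f : V → ℕ} (hf : IsWRDF G f) : Dominating G {v | f v ≠ 0} := by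
  intro v hv
  obtain ⟨u, hadj, hu, _⟩ := hf.2 v (by simpa using hv)
  exact ⟨u, by simp; omega, hadj⟩

lemma aux_support_card {f : V → ℕ} : {v | f v ≠ 0}.ncard ≤ ∑ v, f v := by
  classical
  set S : Set V := {v | f v ≠ 0}
  have h1 : S.ncard = S.toFinset.card := Set.ncard_eq_toFinset_card' S
  have h2 : S.toFinset.card = ∑ v ∈ S.toFinset, 1 := by simp
  have h3 : ∑ v ∈ S.toFinset, 1 ≤ ∑ v ∈ S.toFinset, f v :=
    Finset.sum_le_sum (fun i hi => by
      have : f i ≠ 0 := by simpa [S] using hi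
      omega)
  have h4 : ∑ v ∈ S.toFinset, f v ≤ ∑ v, f v :=
    Finset.sum_le_sum_of_subset (Finset.subset_univ _)
  omega

lemma aux_domNum_le_weakRomanNum : domNum G ≤ weakRomanNum G := by
  obtain ⟨f, hf, hsum⟩ := Nat.sInf_mem (aux_wrSet_nonempty G)
  calc domNum G ≤ {v | f v ≠ 0}.ncard := aux_domNum_le G (aux_support_dom G hf)
    _ ≤ ∑ v, f v := aux_support_card
    _ = weakRomanNum G := hsum

/-- From a secure dominating set, build a WRDF of equal weight. -/
lemma aux_weakRomanNum_le_secDomNum : weakRomanNum G ≤ secDomNum G := by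
  classical
  obtain ⟨S, hS, hc⟩ := Nat.sInf_mem (aux_secSet_nonempty G)
  set f : V → ℕ := fun v => if v ∈ S then 1 else 0 with hfdef
  apply Nat.sInf_le
  refine ⟨f, ⟨fun v => by by_cases h : v ∈ S <;> simp [f, h], ?_⟩, by
    rw [hfdef, aux_indicator_sum]; exact hc⟩
  intro v hv
  have hvS : v ∉ S := by by_contra h; simp [f, h] at hv
  obtain ⟨u, huS, hadj, hdom⟩ := hS.2 v hvS
  have huv : u ≠ v := fun h => hvS (h ▸ huS)
  have hfu : f u = 1 := by simp [f, huS]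
  refine ⟨u, hadj, by omega, ?_⟩
  set f' := Function.update (Function.update f u (f u - 1)) v 1 with hf'def
  set T : Set V := (S \ {u}) ∪ {v} with hTdef
  -- members of T have positive guard after the move
  have hTpos : ∀ x ∈ T, f' x ≠ 0 := by
    intro x hx
    rcases hx with hx | hx
    · have hxS : x ∈ S := hx.1
      have hxu : x ≠ u := hx.2
      have hxv : x ≠ v := fun h => hvS (h ▸ hxS)
      simp [f', Function.update_apply, hxv, hxu, f, hxS]
    · have hxv : x = v := hx
      simp [f', hxv]
  -- nonmembers of T have guard 0
  have hTzero : ∀ x, x ∉ T → f' x = 0 := by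
    intro x hx
    have hxv : x ≠ v := fun h => hx (Or.inr (by simp [h]))
    rcases eq_or_ne x u with rfl | hxu
    · simp [f', Function.update_apply, hxv, hfu]
    · have hxS : x ∉ S := fun h => hx (Or.inl ⟨h, hxu⟩)
      simp [f', Function.update_apply, hxv, hxu, f, hxS]
  rintro w ⟨hw0, hwnb⟩
  by_cases hwT : w ∈ T
  · exact hTpos w hwT hw0
  · obtain ⟨y, hyT, hyadj⟩ := hdom w hwT
    exact hTpos y hyT (hwnb y hyadj)

/-- The key direction: a WRDF of weight γ gives a secure dominating set of size γ. -/
lemma aux_secDomNum_le (h : weakRomanNum G = domNum G) : secDomNum G ≤ domNum G := by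
  classical
  obtain ⟨f, hf, hsum⟩ := Nat.sInf_mem (aux_wrSet_nonempty G)
  have hsum' : ∑ v, f v = domNum G := hsum.trans h
  set S : Set V := {v | f v ≠ 0} with hSdef
  have hdom : Dominating G S := aux_support_dom G hf
  have hcard : S.ncard = domNum G :=
    le_antisymm (aux_support_card.trans_eq hsum') (aux_domNum_le G hdom)
  -- f is the indicator of S
  have hone : ∀ v ∈ S, f v = 1 := by
    by_contra hcon
    push_neg at hcon
    obtain ⟨v₀, hv₀S, hv₀⟩ := hcon
    have hv₀2 : 2 ≤ f v₀ := by
      have h0 : f v₀ ≠ 0 := hv₀S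
      rcases Nat.lt_or_ge (f v₀) 2 with hlt | hge
      · interval_cases (f v₀) <;> simp_all
      · exact hge
    have hlt : ∑ v ∈ S.toFinset, (1 : ℕ) < ∑ v ∈ S.toFinset, f v := by
      apply Finset.sum_lt_sum
      · intro i hi
        have : f i ≠ 0 := by simpa [S] using hi
        exact Nat.one_le_iff_ne_zero.mpr this
      · exact ⟨v₀, by simpa [S] using hv₀S, hv₀2⟩
    have h2 : ∑ v ∈ S.toFinset, f v ≤ ∑ v, f v :=
      Finset.sum_le_sum_of_subset (Finset.subset_univ _)
    have h3 : ∑ v ∈ S.toFinset, (1 : ℕ) = S.ncard := by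
      simp [Set.ncard_eq_toFinset_card' S]
    exact lt_irrefl _ (((h3 ▸ hlt).trans_le h2).trans_eq (hsum'.trans hcard.symm))
  have hzero : ∀ v, v ∉ S → f v = 0 := fun v hv => by simpa [S] using hv
  -- S is secure dominating
  have hsec : SecureDominating G S := by
    refine ⟨hdom, fun v hv => ?_⟩
    obtain ⟨u, hadj, hu1, hund⟩ := hf.2 v (hzero v hv)
    have huS : u ∈ S := Nat.pos_iff_ne_zero.mp hu1
    have hfu : f u = 1 := hone u huS
    have huv : u ≠ v := fun h => hv (h ▸ huS)
    refine ⟨u, huS, hadj, ?_⟩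
    set f' := Function.update (Function.update f u (f u - 1)) v 1 with hf'def
    set T : Set V := (S \ {u}) ∪ {v} with hTdef
    intro w hwT
    have hwv : w ≠ v := fun h => hwT (Or.inr (by simp [h]))
    have hw0 : f' w = 0 := by
      rcases eq_or_ne w u with rfl | hwu
      · simp [f', Function.update_apply, hwv, hfu]
      · have hwS : w ∉ S := fun hh => hwT (Or.inl ⟨hh, hwu⟩)
        simp [f', Function.update_apply, hwv, hwu, hzero w hwS]
    have := hund w
    rw [Undefended] at this
    push_neg at this
    obtain ⟨x, hxadj, hx0⟩ := this hw0
    refine ⟨x, ?_, hxadj⟩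
    rcases eq_or_ne x v with rfl | hxv
    · exact Or.inr rfl
    rcases eq_or_ne x u with rfl | hxu
    · exfalso; apply hx0; simp [f', Function.update_apply, hxv, hfu]
    · have hxS : x ∈ S := by
        by_contra hxS
        exact hx0 (by simp [f', Function.update_apply, hxv, hxu, hzero x hxS])
      exact Or.inl ⟨hxS, hxu⟩
  exact le_of_le_of_eq (Nat.sInf_le ⟨S, hsec, rfl⟩) hcard

end AuxLemmas

theorem stmt2 {V : Type*} [Fintype V] [DecidableEq V] (G : SimpleGraph V) :
    weakRomanNum G = domNum G ↔ secDomNum G = domNum G := by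
  constructor
  · intro h
    exact le_antisymm (aux_secDomNum_le G h) (aux_domNum_le_secDomNum G)
  · intro h
    refine le_antisymm ?_ (aux_domNum_le_weakRomanNum G)
    calc weakRomanNum G ≤ secDomNum G := aux_weakRomanNum_le_secDomNum G
      _ = domNum G := h
end

section
/- If H is a spanning subgraph of a graph G, then γ_s(G) ≤ γ_s(H). -/
open Finset

variable {V : Type*}

theorem stmt3 {V : Type*} (G H : SimpleGraph V) (h : H ≤ G) :
    secDomNum G ≤ secDomNum H := by
  have hdom : ∀ S : Set V, Dominating H S → Dominating G S := by
    intro S hS v hv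
    obtain ⟨u, hu, hadj⟩ := hS v hv
    exact ⟨u, hu, h hadj⟩
  have hsec : ∀ S : Set V, SecureDominating H S → SecureDominating G S := by
    intro S ⟨h1, h2⟩
    refine ⟨hdom S h1, fun v hv => ?_⟩
    obtain ⟨u, hu, hadj, hd⟩ := h2 v hv
    exact ⟨u, hu, h hadj, hdom _ hd⟩
  have hne : {n | ∃ S : Set V, SecureDominating H S ∧ S.ncard = n}.Nonempty := by
    refine ⟨(Set.univ : Set V).ncard, Set.univ, ⟨fun v hv => absurd (Set.mem_univ v) hv,
      fun v hv => absurd (Set.mem_univ v) hv⟩, rfl⟩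
  obtain ⟨S, hS, hcard⟩ := Nat.sInf_mem hne
  exact Nat.sInf_le ⟨S, hsec S hS, hcard⟩
end

section
/- Every 2-dominating set of a graph G is a secure dominating set; consequently γ_s(G) ≤ γ_2(G). -/
open Finset

variable {V : Type*}

/-- `S` is a 2-dominating set of `G`. -/
def TwoDominating (G : SimpleGraph V) (S : Set V) : Prop :=
  ∀ v, v ∉ S → ∃ u ∈ S, ∃ w ∈ S, u ≠ w ∧ G.Adj u v ∧ G.Adj w v

/-- The 2-domination number `γ₂(G)`. -/
noncomputable def twoDomNum (G : SimpleGraph V) : ℕ :=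
  sInf {n | ∃ S : Set V, TwoDominating G S ∧ S.ncard = n}

theorem stmt6 {V : Type*} (G : SimpleGraph V) :
    (∀ S : Set V, TwoDominating G S → SecureDominating G S) ∧
      secDomNum G ≤ twoDomNum G := by
  have key : ∀ S : Set V, TwoDominating G S → SecureDominating G S := by
    intro S hS
    have hdom : Dominating G S := by
      intro v hv
      obtain ⟨u, hu, w, hw, _, hadj, _⟩ := hS v hv
      exact ⟨u, hu, hadj⟩
    refine ⟨hdom, fun v hv => ?_⟩
    obtain ⟨u, hu, w, hw, huw, hadj, hadjw⟩ := hS v hv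
    refine ⟨u, hu, hadj, fun x hx => ?_⟩
    by_cases hxu : x = u
    · exact ⟨v, Or.inr rfl, hxu ▸ hadj.symm⟩
    · have hxS : x ∉ S := fun h => hx (Or.inl ⟨h, fun he => hxu he⟩)
      have hxv : x ≠ v := fun h => hx (Or.inr h)
      obtain ⟨a, ha, b, hb, hab, haa, hba⟩ := hS x hxS
      by_cases hau : a = u
      · exact ⟨b, Or.inl ⟨hb, fun he => hab (hau.trans he.symm)⟩, hba⟩
      · exact ⟨a, Or.inl ⟨ha, hau⟩, haa⟩
  refine ⟨key, ?_⟩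
  apply csInf_le_csInf (OrderBot.bddBelow _)
  · exact ⟨(Set.univ : Set V).ncard, Set.univ, fun v hv => absurd (Set.mem_univ v) hv, rfl⟩
  · rintro n ⟨S, hS, rfl⟩
    exact ⟨S, key S hS, rfl⟩
end

section
/- For any connected graph G with at least 2 vertices, γ_r(G) ≤ ⌊2n(G)/3⌋. -/
open Finset

variable {V : Type*}

section aux

set_option linter.unusedSectionVars false

variable {V : Type*} [Fintype V] [DecidableEq V]

def StarStruct (G : SimpleGraph V) (s : Finset V) (p : V → V) : Prop :=
  (∀ x, x ∉ s → p x = x) ∧ (∀ x, x ∈ s → p x ∈ s) ∧ (∀ x, p (p x) = p x) ∧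
  (∀ x, p x ≠ x → G.Adj (p x) x) ∧ (∀ x, x ∈ s → p x = x → ∃ y, p y = x ∧ y ≠ x)

/-- Glue a new star (centered at `u`, consisting of the moved set `A`) onto an existing
star structure on `s'`. -/
lemma starStruct_glue (G : SimpleGraph V) (s' : Finset V) (p' : V → V) (A : Finset V)
    (u v : V) (hss : StarStruct G s' p') (hvs' : v ∉ s') (hvA : v ∈ A)
    (hAsub : A ⊆ insert v s') (hus' : u ∈ s') (huv : u ≠ v)
    (hcen : u ∈ A ∨ p' u = u)
    (hadjA : ∀ a ∈ A, a ≠ u → G.Adj u a)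
    (hstable : ∀ x, x ∉ A → p' x ∉ A)
    (hfol : ∀ x ∈ s', x ∉ A → p' x = x → ∃ y, y ∉ A ∧ p' y = x ∧ y ≠ x) :
    StarStruct G (insert v s') (fun x => if x ∈ A then u else p' x) := by
  obtain ⟨hp1, hp2, hp3, hp4, hp5⟩ := hss
  refine ⟨?_, ?_, ?_, ?_, ?_⟩
  · intro x hx
    have hxA : x ∉ A := fun h => hx (hAsub h)
    have hxs' : x ∉ s' := fun h => hx (Finset.mem_insert_of_mem h)
    simp only [if_neg hxA]
    exact hp1 x hxs'
  · intro x hx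
    by_cases hxA : x ∈ A
    · simp only [if_pos hxA]
      exact Finset.mem_insert_of_mem hus'
    · simp only [if_neg hxA]
      rcases Finset.mem_insert.mp hx with rfl | hxs'
      · exact absurd hvA hxA
      · exact Finset.mem_insert_of_mem (hp2 x hxs')
  · intro x
    by_cases hxA : x ∈ A
    · simp only [if_pos hxA]
      by_cases huA : u ∈ A
      · simp only [if_pos huA]
      · simp only [if_neg huA]
        exact hcen.resolve_left huA
    · simp only [if_neg hxA, if_neg (hstable x hxA)]
      exact hp3 x
  · intro x hx
    by_cases hxA : x ∈ A
    · simp only [if_pos hxA] at hx ⊢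
      exact hadjA x hxA (fun h => hx h.symm)
    · simp only [if_neg hxA] at hx ⊢
      exact hp4 x hx
  · intro x hx hfix
    by_cases hxA : x ∈ A
    · simp only [if_pos hxA] at hfix
      subst hfix
      exact ⟨v, by simp only [if_pos hvA], huv.symm⟩
    · simp only [if_neg hxA] at hfix
      rcases Finset.mem_insert.mp hx with rfl | hxs'
      · exact absurd hvA hxA
      · obtain ⟨y, hyA, hy, hyx⟩ := hfol x hxs' hxA hfix
        exact ⟨y, by simp only [if_neg hyA]; exact hy, hyx⟩

lemma closer_nbr (G : SimpleGraph V) (hconn : G.Connected) (r v : V) (hne : v ≠ r) :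
    ∃ u, G.Adj u v ∧ G.dist r u < G.dist r v := by
  have hreach : G.Reachable v r := hconn v r
  have hd : G.dist v r ≠ 0 :=
    SimpleGraph.dist_ne_zero_iff_ne_and_reachable.mpr ⟨hne, hreach⟩
  obtain ⟨q, hq⟩ := hreach.exists_walk_length_eq_dist
  cases q with
  | nil => exact absurd rfl hne
  | @cons _ u _ h q =>
      refine ⟨u, h.symm, ?_⟩
      have h1 : G.dist r u ≤ q.length := by
        rw [SimpleGraph.dist_comm]; exact SimpleGraph.dist_le q
      have h2 : G.dist r v = q.length + 1 := by
        rw [SimpleGraph.dist_comm]; simpa using hq.symm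
      omega

lemma exists_starStruct (G : SimpleGraph V) (r : V) :
    ∀ n (s : Finset V), s.card ≤ n → 2 ≤ s.card → r ∈ s →
      (∀ v ∈ s, v ≠ r → ∃ u ∈ s, G.Adj u v ∧ G.dist r u < G.dist r v) →
      ∃ p, StarStruct G s p := by
  intro n
  induction n with
  | zero => intro s h h2 _ _; omega
  | succ n ih =>
    intro s hcard h2 hrs hH
    obtain ⟨v, hvs, hvmax⟩ := s.exists_max_image (G.dist r) ⟨r, hrs⟩
    have hvner : v ≠ r := by
      rintro rfl
      obtain ⟨v0, hv0s, hv0ne⟩ := Finset.exists_mem_ne h2 v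
      obtain ⟨u, hus, -, hdu⟩ := hH v0 hv0s hv0ne
      have := hvmax v0 hv0s
      have hd0 : G.dist v v = 0 := SimpleGraph.dist_self
      omega
    obtain ⟨u, hus, hadj, hdu⟩ := hH v hvs hvner
    have huv : u ≠ v := by rintro rfl; omega
    set s' := s.erase v with hs'
    have hrs' : r ∈ s' := Finset.mem_erase.mpr ⟨hvner.symm, hrs⟩
    have hus' : u ∈ s' := Finset.mem_erase.mpr ⟨huv, hus⟩
    have hvs' : v ∉ s' := Finset.notMem_erase v s
    have hcard' : s'.card + 1 = s.card := Finset.card_erase_add_one hvs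
    have hins : insert v s' = s := Finset.insert_erase hvs
    have hmem : ∀ x, x ∈ s → x ≠ v → x ∈ s' := fun x hx hxv => Finset.mem_erase.mpr ⟨hxv, hx⟩
    by_cases hsmall : s'.card = 1
    · -- base case: s' = {r}
      have hseq : s' = {r} := by
        obtain ⟨a, ha⟩ := Finset.card_eq_one.mp hsmall
        rw [ha] at hrs' ⊢
        simp only [Finset.mem_singleton] at hrs'
        rw [hrs']
      have hur : u = r := by rw [hseq] at hus'; simpa using hus'
      refine ⟨fun x => if x = v then u else x, ?_, ?_, ?_, ?_, ?_⟩
      · intro x hx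
        have hxv : x ≠ v := fun h => hx (h ▸ hvs)
        simp only [if_neg hxv]
      · intro x hx
        by_cases hxv : x = v
        · simp only [if_pos hxv]
          exact hus
        · simp only [if_neg hxv]
          exact hx
      · intro x
        by_cases hxv : x = v
        · simp only [if_pos hxv, if_neg huv]
        · simp only [if_neg hxv]
      · intro x hx
        by_cases hxv : x = v
        · simp only [if_pos hxv] at hx ⊢
          exact hxv ▸ hadj
        · simp only [if_neg hxv] at hx
          exact absurd rfl hx
      · intro x hx hfix
        have hxv : x ≠ v := by
          intro h
          simp only [if_pos h] at hfix
          exact huv (hfix.trans h)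
        simp only [if_neg hxv] at hfix
        have hxu : x = u := by
          have := hmem x hx hxv
          rw [hseq] at this
          rw [hur]
          simpa using this
        refine ⟨v, by simp only [if_pos rfl]; exact hxu.symm, fun h => huv (hxu ▸ h).symm⟩
    · -- recursive case
      have h2' : 2 ≤ s'.card := by
        have h1 : 1 ≤ s'.card := Finset.card_pos.mpr ⟨r, hrs'⟩
        omega
      have hH' : ∀ w ∈ s', w ≠ r → ∃ u' ∈ s', G.Adj u' w ∧ G.dist r u' < G.dist r w := by
        intro w hws' hwr
        have hws : w ∈ s := Finset.mem_of_mem_erase hws'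
        obtain ⟨u', hu's, ha, hd⟩ := hH w hws hwr
        have hu'v : u' ≠ v := by
          rintro rfl
          have := hvmax w hws
          omega
        exact ⟨u', Finset.mem_erase.mpr ⟨hu'v, hu's⟩, ha, hd⟩
      obtain ⟨p', hss'⟩ := ih s' (by omega) h2' hrs' hH'
      obtain ⟨hp1, hp2, hp3, hp4, hp5⟩ := hss'
      have hp'v : p' v = v := hp1 v hvs'
      have hnv : ∀ x, x ≠ v → p' x ≠ v := by
        intro x hx
        by_cases hxs : x ∈ s'
        · intro h; exact hvs' (h ▸ hp2 x hxs)
        · rw [hp1 x hxs]; exact hx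
      have hnocen : ∀ x y, p' x ≠ x → p' y ≠ x := by
        intro x y hx h
        exact hx (by rw [← h, hp3, h])
      by_cases hu : p' u = u
      · -- case A : attach v to center u
        refine ⟨_, hins ▸ starStruct_glue G s' p' {v} u v ⟨hp1, hp2, hp3, hp4, hp5⟩ hvs'
          (Finset.mem_singleton_self v) ?_ hus' huv (Or.inr hu) ?_ ?_ ?_⟩
        · intro a ha
          rw [Finset.mem_singleton] at ha
          exact ha ▸ Finset.mem_insert_self v s'
        · intro a ha _
          rw [Finset.mem_singleton] at ha
          exact ha ▸ hadj
        · intro x hx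
          rw [Finset.mem_singleton] at hx ⊢
          exact hnv x hx
        · intro x hxs' hxA hfix
          obtain ⟨y, hy, hyx⟩ := hp5 x hxs' hfix
          have hyv : y ≠ v := by
            rintro rfl; rw [hp'v] at hy
            exact (Finset.mem_singleton.not.mp hxA) hy.symm
          exact ⟨y, Finset.mem_singleton.not.mpr hyv, hy, hyx⟩
      · -- u is a follower of center c
        set c := p' u with hc
        have hcu : c ≠ u := hu
        have hadjcu : G.Adj c u := hp4 u hcu
        have hcs' : c ∈ s' := hp2 u hus'
        have hcfix : p' c = c := hp3 u
        have hcv : c ≠ v := fun h => hvs' (h ▸ hcs')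
        have hpxnu : ∀ x, p' x ≠ u := fun x => hnocen u x hcu
        by_cases hfib : ∃ w, p' w = c ∧ w ≠ u ∧ w ≠ c
        · -- case B1: c has another follower; split off the pair {u, v}
          obtain ⟨w0, hw0c, hw0u, hw0cne⟩ := hfib
          have hw0v : w0 ≠ v := by rintro rfl; rw [hp'v] at hw0c; exact hcv hw0c.symm
          refine ⟨_, hins ▸ starStruct_glue G s' p' {v, u} u v ⟨hp1, hp2, hp3, hp4, hp5⟩ hvs'
            (by simp) ?_ hus' huv (Or.inl (by simp)) ?_ ?_ ?_⟩
          · intro a ha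
            simp only [Finset.mem_insert, Finset.mem_singleton] at ha
            rcases ha with rfl | rfl
            · exact Finset.mem_insert_self a s'
            · exact Finset.mem_insert_of_mem hus'
          · intro a ha hau
            simp only [Finset.mem_insert, Finset.mem_singleton] at ha
            rcases ha with rfl | rfl
            · exact hadj
            · exact absurd rfl hau
          · intro x hx
            simp only [Finset.mem_insert, Finset.mem_singleton] at hx ⊢
            push_neg at hx ⊢
            exact ⟨hnv x hx.1, hpxnu x⟩
          · intro x hxs' hxA hfix
            simp only [Finset.mem_insert, Finset.mem_singleton] at hxA
            push_neg at hxA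
            obtain ⟨y, hy, hyx⟩ := hp5 x hxs' hfix
            by_cases hyu : y = u
            · have hxc : x = c := by rw [← hy, hyu]
              refine ⟨w0, ?_, hxc ▸ hw0c.symm ▸ rfl, hxc ▸ hw0cne⟩
              simp only [Finset.mem_insert, Finset.mem_singleton]
              push_neg
              exact ⟨hw0v, hw0u⟩
            · have hyv : y ≠ v := by rintro rfl; rw [hp'v] at hy; exact hxA.1 hy.symm
              refine ⟨y, ?_, hy, hyx⟩
              simp only [Finset.mem_insert, Finset.mem_singleton]
              push_neg
              exact ⟨hyv, hyu⟩
        · -- case B2: c has only follower u; form star {c, u, v} centered at u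
          have hfib' : ∀ w, p' w = c → w = u ∨ w = c := by
            intro w hw
            by_contra hcon
            push_neg at hcon
            exact hfib ⟨w, hw, hcon.1, hcon.2⟩
          refine ⟨_, hins ▸ starStruct_glue G s' p' {v, u, c} u v ⟨hp1, hp2, hp3, hp4, hp5⟩ hvs'
            (by simp) ?_ hus' huv (Or.inl (by simp)) ?_ ?_ ?_⟩
          · intro a ha
            simp only [Finset.mem_insert, Finset.mem_singleton] at ha
            rcases ha with rfl | rfl | rfl
            · exact Finset.mem_insert_self a s'
            · exact Finset.mem_insert_of_mem hus'
            · exact Finset.mem_insert_of_mem hcs'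
          · intro a ha hau
            simp only [Finset.mem_insert, Finset.mem_singleton] at ha
            rcases ha with rfl | rfl | rfl
            · exact hadj
            · exact absurd rfl hau
            · exact hadjcu.symm
          · intro x hx
            simp only [Finset.mem_insert, Finset.mem_singleton] at hx ⊢
            push_neg at hx ⊢
            refine ⟨hnv x hx.1, hpxnu x, ?_⟩
            intro h
            rcases hfib' x h with rfl | rfl
            · exact hx.2.1 rfl
            · exact hx.2.2 rfl
          · intro x hxs' hxA hfix
            simp only [Finset.mem_insert, Finset.mem_singleton] at hxA
            push_neg at hxA
            obtain ⟨y, hy, hyx⟩ := hp5 x hxs' hfix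
            have hyv : y ≠ v := by rintro rfl; rw [hp'v] at hy; exact hxA.1 hy.symm
            have hyu : y ≠ u := by rintro rfl; exact hxA.2.2 (hy.symm.trans hc.symm)
            have hyc : y ≠ c := by rintro rfl; rw [hcfix] at hy; exact hxA.2.2 hy.symm
            refine ⟨y, ?_, hy, hyx⟩
            simp only [Finset.mem_insert, Finset.mem_singleton]
            push_neg
            exact ⟨hyv, hyu, hyc⟩


theorem final_bound (G : SimpleGraph V) (hconn : G.Connected) (hn : 2 ≤ Fintype.card V) :
    ∃ f : V → ℕ, IsWRDF G f ∧ 3 * ∑ v, f v ≤ 2 * Fintype.card V := by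
  have hne : Nonempty V := Fintype.card_pos_iff.mp (by omega)
  obtain ⟨r⟩ := hne
  have hH : ∀ v ∈ (univ : Finset V), v ≠ r → ∃ u ∈ (univ : Finset V),
      G.Adj u v ∧ G.dist r u < G.dist r v := by
    intro v _ hne
    obtain ⟨u, ha, hd⟩ := closer_nbr G hconn r v hne
    exact ⟨u, Finset.mem_univ u, ha, hd⟩
  obtain ⟨p, hp1, hp2, hp3, hp4, hp5⟩ := exists_starStruct G r (Fintype.card V) univ
    (by rw [Finset.card_univ]) (by rwa [Finset.card_univ]) (Finset.mem_univ r) hH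
  classical
  set fib : V → Finset V := fun c => univ.filter (fun y => p y = c) with hfib
  set f : V → ℕ := fun x => if p x = x then min 2 ((fib x).card - 1) else 0 with hf
  have hmemfib : ∀ x c, x ∈ fib c ↔ p x = c := by
    intro x c; simp [hfib]
  have hfib2 : ∀ c, p c = c → 2 ≤ (fib c).card := by
    intro c hc
    obtain ⟨y, hy, hyc⟩ := hp5 c (Finset.mem_univ c) hc
    have h1 : c ∈ fib c := (hmemfib c c).mpr hc
    have h2 : y ∈ fib c := (hmemfib y c).mpr hy
    exact Finset.one_lt_card.mpr ⟨y, h2, c, h1, hyc⟩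
  have hfc : ∀ c, p c = c → f c = min 2 ((fib c).card - 1) := by
    intro c hc; simp [hf, hc]
  have hfc1 : ∀ c, p c = c → 1 ≤ f c := by
    intro c hc
    rw [hfc c hc]
    have := hfib2 c hc
    omega
  have hf0 : ∀ x, p x ≠ x → f x = 0 := by
    intro x hx; simp [hf, hx]
  refine ⟨f, ⟨?_, ?_⟩, ?_⟩
  · intro v
    by_cases hv : p v = v
    · rw [hfc v hv]; omega
    · rw [hf0 v hv]; omega
  · intro v hv0
    have hpv : p v ≠ v := by
      intro h
      have := hfc1 v h
      omega
    obtain ⟨u, hu⟩ : ∃ u, p v = u := ⟨p v, rfl⟩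
    have hadj : G.Adj u v := hu ▸ hp4 v hpv
    have huv : u ≠ v := hu ▸ hpv
    have hucen : p u = u := by rw [← hu]; exact hp3 v
    have hfu : 1 ≤ f u := hfc1 u hucen
    refine ⟨u, hadj, hfu, ?_⟩
    set g := Function.update (Function.update f u (f u - 1)) v 1 with hg
    have hgv : g v = 1 := Function.update_self v 1 _
    have hgu : g u = f u - 1 := by
      rw [hg, Function.update_of_ne huv, Function.update_self]
    have hgx : ∀ x, x ≠ v → x ≠ u → g x = f x := by
      intro x hxv hxu
      rw [hg, Function.update_of_ne hxv, Function.update_of_ne hxu]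
    rintro w ⟨hgw, hnbr⟩
    by_cases hwv : w = v
    · rw [hwv, hgv] at hgw; omega
    by_cases hwu : w = u
    · have := hnbr v (hwu ▸ hadj.symm)
      rw [hgv] at this; omega
    -- w is an untouched vertex with g w = f w = 0, hence a follower
    rw [hgx w hwv hwu] at hgw
    have hpw : p w ≠ w := by
      intro h
      have := hfc1 w h
      omega
    obtain ⟨cw, hcw⟩ : ∃ cw, p w = cw := ⟨p w, rfl⟩
    have hadjw : G.Adj cw w := hcw ▸ hp4 w hpw
    have hcwcen : p cw = cw := by rw [← hcw]; exact hp3 w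
    have hcwv : cw ≠ v := by
      intro h
      rw [h] at hcwcen
      exact hpv hcwcen
    have hnbrcw := hnbr cw hadjw
    by_cases hcwu : cw = u
    · -- f u must be 1, so fiber of u has exactly 2 elements; but u, v, w are in it
      rw [hcwu] at hnbrcw
      rw [hgu] at hnbrcw
      have hfu1 : f u = 1 := by omega
      have hcard2 : (fib u).card = 2 := by
        have h2 := hfib2 u hucen
        have := hfc u hucen
        rw [hfu1] at this
        omega
      have hsub : ({u, v, w} : Finset V) ⊆ fib u := by
        intro x hx
        simp only [Finset.mem_insert, Finset.mem_singleton] at hx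
        rcases hx with h | h | h
        · rw [h]; exact (hmemfib u u).mpr hucen
        · rw [h]; exact (hmemfib v u).mpr hu
        · rw [h]; exact (hmemfib w u).mpr (hcwu ▸ hcw)
      have hc3 : ({u, v, w} : Finset V).card = 3 := by
        rw [Finset.card_insert_of_notMem (by simp [huv, Ne.symm hwu]),
          Finset.card_insert_of_notMem (by simp [Ne.symm hwv]),
          Finset.card_singleton]
      have := Finset.card_le_card hsub
      omega
    · rw [hgx cw hcwv hcwu] at hnbrcw
      have := hfc1 cw hcwcen
      omega
  · -- the sum bound
    set C : Finset V := univ.filter (fun x => p x = x) with hC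
    have hsum1 : ∑ v, f v = ∑ c ∈ C, f c := by
      refine (Finset.sum_subset (Finset.subset_univ C) ?_).symm
      intro x _ hx
      have : p x ≠ x := by
        intro h
        exact hx (Finset.mem_filter.mpr ⟨Finset.mem_univ x, h⟩)
      exact hf0 x this
    have hsum2 : Fintype.card V = ∑ c ∈ C, (fib c).card := by
      rw [← Finset.card_univ]
      exact Finset.card_eq_sum_card_fiberwise
        (fun x _ => Finset.mem_filter.mpr ⟨Finset.mem_univ _, hp3 x⟩)
    rw [hsum1, hsum2, Finset.mul_sum, Finset.mul_sum]
    refine Finset.sum_le_sum ?_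
    intro c hc
    have hcc : p c = c := (Finset.mem_filter.mp hc).2
    have h2 := hfib2 c hcc
    rw [hfc c hcc]
    omega


end aux

theorem stmt7 {V : Type*} [Fintype V] [DecidableEq V] (G : SimpleGraph V)
    (hconn : G.Connected) (hn : 2 ≤ Fintype.card V) :
    weakRomanNum G ≤ 2 * Fintype.card V / 3 := by
  obtain ⟨f, hwrdf, hsum⟩ := final_bound G hconn hn
  have h1 : weakRomanNum G ≤ ∑ v, f v :=
    Nat.sInf_le ⟨f, hwrdf, rfl⟩
  have h2 : ∑ v, f v ≤ 2 * Fintype.card V / 3 := by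
    rw [Nat.le_div_iff_mul_le (by omega : 0 < 3)]
    omega
  exact h1.trans h2
end

section
/- For the corona graph G' ⊙ N_t of any graph G' with the empty graph on t vertices, γ_s(G' ⊙ N_t) = t·n(G'). -/
open Finset

variable {V : Type*}

/-- The corona `G ⊙ N_t` of a graph `G` with the empty graph on `t` vertices:
each vertex `v` of `G` is joined to the `t` vertices of its own copy of `N_t`. -/
def corona (G : SimpleGraph V) (t : ℕ) : SimpleGraph (V ⊕ (V × Fin t)) :=
  SimpleGraph.fromRel (fun a b =>
    match a, b with
    | Sum.inl u, Sum.inl v => G.Adj u v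
    | Sum.inl u, Sum.inr p => u = p.1
    | _, _ => False)

section Aux

variable {V : Type*}

lemma corona_adj_inr {G : SimpleGraph V} {t : ℕ} {w : V ⊕ V × Fin t} {v : V} {i : Fin t} :
    (corona G t).Adj w (Sum.inr (v, i)) ↔ w = Sum.inl v := by
  cases w with
  | inl u => simp [corona, SimpleGraph.fromRel_adj]
  | inr p => simp [corona, SimpleGraph.fromRel_adj]

lemma corona_adj_inl_inr {G : SimpleGraph V} {t : ℕ} {v : V} {i : Fin t} :
    (corona G t).Adj (Sum.inl v) (Sum.inr (v, i)) :=
  corona_adj_inr.mpr rfl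

end Aux

theorem stmt9 {V : Type*} [Fintype V] (G : SimpleGraph V) (t : ℕ) (ht : 1 ≤ t) :
    secDomNum (corona G t) = t * Fintype.card V := by
  classical
  set S : Set (V ⊕ V × Fin t) := Set.range Sum.inr with hS
  have hScard : S.ncard = t * Fintype.card V := by
    rw [hS, ← Set.image_univ, Set.ncard_image_of_injective _ Sum.inr_injective, Set.ncard_univ]
    simp [Nat.card_eq_fintype_card, mul_comm]
  have i0 : Fin t := ⟨0, ht⟩
  have hmem : t * Fintype.card V ∈
      {n | ∃ T : Set (V ⊕ V × Fin t), SecureDominating (corona G t) T ∧ T.ncard = n} := by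
    refine ⟨S, ⟨?_, ?_⟩, hScard⟩
    · intro v hv
      match v with
      | Sum.inl u =>
        exact ⟨Sum.inr (u, i0), ⟨(u, i0), rfl⟩, (corona G t).adj_symm corona_adj_inl_inr⟩
      | Sum.inr p => exact absurd ⟨p, rfl⟩ hv
    · intro v hv
      match v with
      | Sum.inl u =>
        refine ⟨Sum.inr (u, i0), ⟨(u, i0), rfl⟩, (corona G t).adj_symm corona_adj_inl_inr, ?_⟩
        intro w hw
        match w with
        | Sum.inl x =>
          have hxu : x ≠ u := by
            intro h; subst h; exact hw (Or.inr rfl)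
          refine ⟨Sum.inr (x, i0), Or.inl ⟨⟨(x, i0), rfl⟩, ?_⟩,
            (corona G t).adj_symm corona_adj_inl_inr⟩
          simp only [Set.mem_singleton_iff]
          intro h
          injection h with h'
          exact hxu (congrArg Prod.fst h')
        | Sum.inr p =>
          have hp : p = (u, i0) := by
            by_contra hne
            exact hw (Or.inl ⟨⟨p, rfl⟩, by simpa using hne⟩)
          subst hp
          exact ⟨Sum.inl u, Or.inr rfl, corona_adj_inl_inr⟩
      | Sum.inr p => exact absurd ⟨p, rfl⟩ hv
  refine le_antisymm (Nat.sInf_le hmem) (le_csInf ⟨_, hmem⟩ ?_)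
  rintro n ⟨T, ⟨hTdom, hTsec⟩, rfl⟩
  -- every leaf of v is in T, or exactly one leaf is missing and then Sum.inl v ∈ T
  -- build an injection g : V × Fin t → T
  have key : ∀ v : V, ∀ i : Fin t, Sum.inr (v, i) ∉ T →
      Sum.inl v ∈ T ∧ ∀ j : Fin t, j ≠ i → Sum.inr (v, j) ∈ T := by
    intro v i hvi
    obtain ⟨u, huT, huAdj, hdom⟩ := hTsec _ hvi
    have hu : u = Sum.inl v := corona_adj_inr.mp huAdj
    subst hu
    refine ⟨huT, fun j hj => ?_⟩
    by_contra hvj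
    have hnot : Sum.inr (v, j) ∉ (T \ {Sum.inl v}) ∪ {Sum.inr (v, i)} := by
      rintro (⟨h1, _⟩ | h2)
      · exact hvj h1
      · simp only [Set.mem_singleton_iff, Sum.inr.injEq, Prod.mk.injEq] at h2
        exact hj h2.2
    obtain ⟨w, hwmem, hwAdj⟩ := hdom _ hnot
    have hw : w = Sum.inl v := corona_adj_inr.mp hwAdj
    subst hw
    rcases hwmem with ⟨_, h⟩ | h
    · exact h rfl
    · simp at h
  choose badFn hbad using fun v (h : ¬ ∀ i : Fin t, Sum.inr (v, i) ∈ T) =>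
    not_forall.mp h
  let g : V × Fin t → V ⊕ V × Fin t := fun p =>
    if h : ∀ i : Fin t, Sum.inr (p.1, i) ∈ T then Sum.inr p
    else if p.2 = badFn p.1 h then Sum.inl p.1 else Sum.inr p
  have hgT : ∀ p, g p ∈ T := by
    rintro ⟨v, i⟩
    simp only [g]
    split
    · exact ‹∀ i, Sum.inr (v, i) ∈ T› i
    · rename_i h
      split
      · exact (key v (badFn v h) (hbad v h)).1
      · exact (key v (badFn v h) (hbad v h)).2 i ‹_›
  have hproj : ∀ p : V × Fin t, Sum.elim id Prod.fst (g p) = p.1 := by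
    intro p
    simp only [g]
    split
    · rfl
    · split <;> rfl
  have hginj : Function.Injective g := by
    rintro ⟨v, i⟩ ⟨w, j⟩ hgeq
    have hvw : v = w := by
      have h2 := congrArg (Sum.elim id Prod.fst) hgeq
      rwa [hproj, hproj] at h2
    subst hvw
    suffices h : i = j by rw [h]
    simp only [g] at hgeq
    split at hgeq
    · simpa using hgeq
    · split at hgeq <;> split at hgeq <;> rename_i h1 h2
      · exact h1.trans h2.symm
      · simp at hgeq
      · simp at hgeq
      · simpa using hgeq
  calc t * Fintype.card V = (Set.range g).ncard := by
        rw [← Set.image_univ, Set.ncard_image_of_injective _ hginj, Set.ncard_univ]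
        simp [Nat.card_eq_fintype_card, mul_comm]
    _ ≤ T.ncard := Set.ncard_le_ncard (Set.range_subset_iff.mpr hgT) T.toFinite
end

section
/- If a graph G has no isolated vertices, then γ_s(G) ≤ n(G) − γ(G). -/
open Finset

variable {V : Type*}

/-- Our notion of matching: a finset of ordered pairs of adjacent vertices with
pairwise disjoint endpoints. -/
def IsMatching (G : SimpleGraph V) (M : Finset (V × V)) : Prop :=
  (∀ e ∈ M, G.Adj e.1 e.2) ∧ ∀ e ∈ M, ∀ e' ∈ M, e ≠ e' →
    e.1 ≠ e'.1 ∧ e.1 ≠ e'.2 ∧ e.2 ≠ e'.1 ∧ e.2 ≠ e'.2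

lemma matching_snd_injOn {G : SimpleGraph V} {M : Finset (V × V)}
    (hM : IsMatching G M) : Set.InjOn Prod.snd (M : Set (V × V)) := by
  intro e he e' he' hee
  by_contra hne
  exact (hM.2 e (Finset.mem_coe.1 he) e' (Finset.mem_coe.1 he') hne).2.2.2 hee

lemma matching_fst_not_snd {G : SimpleGraph V} {M : Finset (V × V)}
    (hM : IsMatching G M) {e e' : V × V} (he : e ∈ M) (he' : e' ∈ M) :
    e.1 ≠ e'.2 := by
  rcases eq_or_ne e e' with rfl | hne
  · exact (hM.1 e he).ne
  · exact (hM.2 e he e' he' hne).2.1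

/-- The complement of the set of second endpoints of a matching is secure dominating. -/
lemma matching_secure [Fintype V] [DecidableEq V] {G : SimpleGraph V}
    {M : Finset (V × V)} (hM : IsMatching G M) :
    SecureDominating G ↑(Finset.univ \ M.image Prod.snd) := by
  have hmem : ∀ v : V, v ∉ (↑(Finset.univ \ M.image Prod.snd) : Set V) ↔
      ∃ e ∈ M, v = e.2 := by
    intro v
    simp [eq_comm]
  constructor
  · intro v hv
    obtain ⟨e, he, rfl⟩ := (hmem v).1 hv
    refine ⟨e.1, ?_, hM.1 e he⟩
    simp only [Finset.coe_sdiff, Finset.coe_univ, Set.mem_diff, Set.mem_univ, true_and,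
      Finset.mem_coe, Finset.mem_image, not_exists]
    rintro e' ⟨he', h1⟩
    exact matching_fst_not_snd hM he he' h1.symm
  · intro v hv
    obtain ⟨e, he, rfl⟩ := (hmem v).1 hv
    have he1 : e.1 ∈ (↑(Finset.univ \ M.image Prod.snd) : Set V) := by
      simp only [Finset.coe_sdiff, Finset.coe_univ, Set.mem_diff, Set.mem_univ, true_and,
        Finset.mem_coe, Finset.mem_image, not_exists]
      rintro e' ⟨he', h1⟩
      exact matching_fst_not_snd hM he he' h1.symm
    refine ⟨e.1, he1, hM.1 e he, ?_⟩
    intro w hw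
    have hw' : w ∉ (↑(Finset.univ \ M.image Prod.snd) : Set V) \ {e.1} ∧ w ≠ e.2 := by
      constructor
      · intro hmem'; exact hw (Set.mem_union_left _ hmem')
      · intro hweq; exact hw (Set.mem_union_right _ (by simp [hweq]))
    rcases Classical.em (w = e.1) with rfl | hwne
    · -- w = e.1 is dominated by e.2 which is in the new set
      exact ⟨e.2, Set.mem_union_right _ rfl, (hM.1 e he).symm⟩
    · have : w ∉ (↑(Finset.univ \ M.image Prod.snd) : Set V) := by
        intro hmem'
        exact hw'.1 ⟨hmem', hwne⟩
      obtain ⟨e', he', rfl⟩ := (hmem w).1 this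
      have hne : e' ≠ e := by
        intro hh; exact hw'.2 (by rw [hh])
      refine ⟨e'.1, ?_, hM.1 e' he'⟩
      refine Set.mem_union_left _ ⟨?_, ?_⟩
      · simp only [Finset.coe_sdiff, Finset.coe_univ, Set.mem_diff, Set.mem_univ, true_and,
          Finset.mem_coe, Finset.mem_image, not_exists]
        rintro e'' ⟨he'', h1⟩
        exact matching_fst_not_snd hM he' he'' h1.symm
      · simp only [Set.mem_singleton_iff]
        exact (hM.2 e' he' e he hne).1

theorem stmt10 {V : Type*} [Fintype V] (G : SimpleGraph V)
    (h : ∀ v : V, ∃ u, G.Adj u v) :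
    secDomNum G ≤ Fintype.card V - domNum G := by
  classical
  -- pick a maximum matching
  obtain ⟨M, hMP, hmax⟩ : ∃ M, IsMatching G M ∧
      ∀ N, IsMatching G N → N.card ≤ M.card := by
    obtain ⟨M, hM1, hM2⟩ := Finset.exists_max_image
      (Finset.univ.filter fun M => IsMatching G M) Finset.card
      ⟨∅, by simp [IsMatching]⟩
    exact ⟨M, (Finset.mem_filter.1 hM1).2, fun N hN =>
      hM2 N (Finset.mem_filter.2 ⟨Finset.mem_univ _, hN⟩)⟩
  obtain ⟨hadj, hdisj⟩ := hMP
  set sat : V → Prop := fun v => ∃ e ∈ M, v = e.1 ∨ v = e.2 with hsatdef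
  have hnsat : ∀ u, ¬ sat u → ∀ e ∈ M, u ≠ e.1 ∧ u ≠ e.2 := by
    intro u hu e he
    exact ⟨fun hh => hu ⟨e, he, Or.inl hh⟩, fun hh => hu ⟨e, he, Or.inr hh⟩⟩
  -- every neighbor of an unmatched vertex is matched
  have key1 : ∀ u x, ¬ sat u → G.Adj x u → sat x := by
    intro u x hu hxu
    by_contra hx
    have hnotin : (x, u) ∉ M := fun hh => hx ⟨(x, u), hh, Or.inl rfl⟩
    have hP : IsMatching G (insert (x, u) M) := by
      constructor
      · intro e he
        rcases Finset.mem_insert.1 he with rfl | he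
        · exact hxu
        · exact hadj e he
      · intro e he e' he' hne
        rcases Finset.mem_insert.1 he with rfl | he <;>
          rcases Finset.mem_insert.1 he' with rfl | he'
        · exact absurd rfl hne
        · exact ⟨(hnsat x hx e' he').1, (hnsat x hx e' he').2,
            (hnsat u hu e' he').1, (hnsat u hu e' he').2⟩
        · exact ⟨((hnsat x hx e he).1).symm, ((hnsat u hu e he).1).symm,
            ((hnsat x hx e he).2).symm, ((hnsat u hu e he).2).symm⟩
        · exact hdisj e he e' he' hne
    have := hmax _ hP
    rw [Finset.card_insert_of_notMem hnotin] at this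
    omega
  -- "no augmenting path of length 3"
  have key2 : ∀ e ∈ M, ∀ w v, ¬ sat w → ¬ sat v → w ≠ v →
      G.Adj e.1 w → G.Adj e.2 v → False := by
    intro e he w v hw hv hwv h1w h2v
    set N : Finset (V × V) := insert (e.1, w) (insert (e.2, v) (M.erase e)) with hN
    have hmem1 : (e.1, w) ∉ insert (e.2, v) (M.erase e) := by
      simp only [Finset.mem_insert, Finset.mem_erase, Prod.mk.injEq, not_or]
      refine ⟨fun hh => (hadj e he).ne (hh.1), ?_⟩
      rintro ⟨hne, hmem⟩
      exact ((hnsat w hw _ hmem).2) rfl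
    have hmem2 : (e.2, v) ∉ M.erase e := by
      rintro hh
      exact ((hnsat v hv _ (Finset.mem_of_mem_erase hh)).2) rfl
    have hP : IsMatching G N := by
      constructor
      · intro f hf
        rcases Finset.mem_insert.1 hf with rfl | hf
        · exact h1w
        rcases Finset.mem_insert.1 hf with rfl | hf
        · exact h2v
        · exact hadj f (Finset.mem_of_mem_erase hf)
      · intro f hf f' hf' hne
        have hcases : ∀ g, g ∈ N → g = (e.1, w) ∨ g = (e.2, v) ∨
            (g ∈ M ∧ g ≠ e) := by
          intro g hg
          rcases Finset.mem_insert.1 hg with rfl | hg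
          · exact Or.inl rfl
          rcases Finset.mem_insert.1 hg with rfl | hg
          · exact Or.inr (Or.inl rfl)
          · exact Or.inr (Or.inr ⟨Finset.mem_of_mem_erase hg,
              (Finset.mem_erase.1 hg).1⟩)
        have hend : ∀ g, g ∈ M → g ≠ e → g.1 ≠ e.1 ∧ g.1 ≠ e.2 ∧ g.2 ≠ e.1 ∧ g.2 ≠ e.2 :=
          fun g hg hge => hdisj g hg e he hge
        rcases hcases f hf with rfl | rfl | ⟨hfM, hfe⟩ <;>
          rcases hcases f' hf' with rfl | rfl | ⟨hf'M, hf'e⟩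
        · exact absurd rfl hne
        · exact ⟨(hadj e he).ne, fun hh => hv ⟨e, he, Or.inl hh.symm⟩,
            fun hh => hw ⟨e, he, Or.inr hh⟩, hwv⟩
        · exact ⟨fun hh => (hend f' hf'M hf'e).1 hh.symm,
            fun hh => (hend f' hf'M hf'e).2.2.1 hh.symm,
            (hnsat w hw f' hf'M).1, (hnsat w hw f' hf'M).2⟩
        · exact ⟨fun hh => (hadj e he).ne hh.symm, fun hh => hw ⟨e, he, Or.inr hh.symm⟩,
            fun hh => hv ⟨e, he, Or.inl hh⟩, fun hh => hwv hh.symm⟩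
        · exact absurd rfl hne
        · exact ⟨fun hh => (hend f' hf'M hf'e).2.1 hh.symm,
            fun hh => (hend f' hf'M hf'e).2.2.2 hh.symm,
            (hnsat v hv f' hf'M).1, (hnsat v hv f' hf'M).2⟩
        · exact ⟨(hend f hfM hfe).1, fun hh => ((hnsat w hw f hfM).1) hh.symm,
            (hend f hfM hfe).2.2.1, fun hh => ((hnsat w hw f hfM).2) hh.symm⟩
        · exact ⟨(hend f hfM hfe).2.1, fun hh => ((hnsat v hv f hfM).1) hh.symm,
            (hend f hfM hfe).2.2.2, fun hh => ((hnsat v hv f hfM).2) hh.symm⟩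
        · exact hdisj f hfM f' hf'M hne
    have hcard : N.card = M.card + 1 := by
      rw [hN, Finset.card_insert_of_notMem hmem1, Finset.card_insert_of_notMem hmem2,
        Finset.card_erase_of_mem he]
      have : 1 ≤ M.card := Finset.card_pos.2 ⟨e, he⟩
      omega
    have := hmax _ hP
    omega
  -- dominating set of size ≤ |M|
  set f : V × V → V := fun e => if ∃ w, ¬ sat w ∧ G.Adj e.1 w then e.1 else e.2 with hf
  have hdom : Dominating G ↑(M.image f) := by
    intro v hv
    have hvnot : ∀ e ∈ M, f e ≠ v := by
      intro e he hh
      exact hv (by exact_mod_cast Finset.mem_image.2 ⟨e, he, hh⟩)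
    rcases Classical.em (sat v) with ⟨e, he, hor⟩ | hvsat
    · rcases hor with rfl | rfl
      · -- v = e.1, so f e = e.2
        have : f e = e.2 := by
          rcases Classical.em (∃ w, ¬ sat w ∧ G.Adj e.1 w) with hc | hc
          · exact absurd (by rw [hf]; simp [hc]) (hvnot e he)
          · rw [hf]; simp [hc]
        exact ⟨e.2, by exact_mod_cast Finset.mem_image.2 ⟨e, he, this⟩, (hadj e he).symm⟩
      · -- v = e.2, so f e = e.1
        have : f e = e.1 := by
          rcases Classical.em (∃ w, ¬ sat w ∧ G.Adj e.1 w) with hc | hc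
          · rw [hf]; simp [hc]
          · exact absurd (by rw [hf]; simp [hc]) (hvnot e he)
        exact ⟨e.1, by exact_mod_cast Finset.mem_image.2 ⟨e, he, this⟩, hadj e he⟩
    · -- v unmatched: it has a neighbor x, which is matched
      obtain ⟨x, hx⟩ := h v
      have hxsat : sat x := key1 v x hvsat hx
      obtain ⟨e, he, hor⟩ := hxsat
      rcases hor with rfl | rfl
      · -- x = e.1 has unmatched neighbor v, so f e = e.1
        have hfe : f e = e.1 := by
          rw [hf]; simp only []
          rw [if_pos ⟨v, hvsat, hx⟩]
        exact ⟨e.1, by exact_mod_cast Finset.mem_image.2 ⟨e, he, hfe⟩, hx⟩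
      · -- x = e.2
        rcases Classical.em (∃ w, ¬ sat w ∧ G.Adj e.1 w) with ⟨w, hw, h1w⟩ | hc
        · rcases eq_or_ne w v with rfl | hwv
          · have hfe : f e = e.1 := by rw [hf]; simp only []; rw [if_pos ⟨w, hw, h1w⟩]
            exact ⟨e.1, by exact_mod_cast Finset.mem_image.2 ⟨e, he, hfe⟩, h1w⟩
          · exact absurd (key2 e he w v hw hvsat hwv h1w hx) not_false
        · have hfe : f e = e.2 := by rw [hf]; simp only []; rw [if_neg hc]
          exact ⟨e.2, by exact_mod_cast Finset.mem_image.2 ⟨e, he, hfe⟩, hx⟩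
  -- γ ≤ |M|
  have hγ : domNum G ≤ M.card := by
    have h1 : domNum G ≤ (M.image f).card :=
      Nat.sInf_le ⟨↑(M.image f), hdom, Set.ncard_coe_finset _⟩
    exact h1.trans (Finset.card_image_le)
  -- γ_s ≤ n - |M|
  have hs : secDomNum G ≤ Fintype.card V - M.card := by
    have hsec := matching_secure (G := G) (M := M) ⟨hadj, hdisj⟩
    have hcard : (Finset.univ \ M.image Prod.snd).card = Fintype.card V - M.card := by
      rw [Finset.card_sdiff_of_subset (Finset.subset_univ _), Finset.card_univ,
        Finset.card_image_of_injOn (matching_snd_injOn ⟨hadj, hdisj⟩)]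
    exact Nat.sInf_le ⟨_, hsec, by rw [Set.ncard_coe_finset, hcard]⟩
  exact hs.trans (Nat.sub_le_sub_left hγ _)
end

section
/- If no component of a graph G is a complete graph, then γ_s(G) ≤ n(G) − γ(G) − τ(G), where τ(G) is the maximum of |T(S)| over all minimum dominating sets S, with T(S) the set of vertices outside S having a true twin in S. -/
open Finset

variable {V : Type*}

/-- The closed neighbourhood of a vertex. -/
def closedNbr (G : SimpleGraph V) (v : V) : Set V := insert v (G.neighborSet v)

/-- No connected component of `G` is a complete graph: every component contains
two distinct non-adjacent vertices. -/
def NoCompleteComponent (G : SimpleGraph V) : Prop :=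
  ∀ v : V, ∃ u w, G.Reachable v u ∧ G.Reachable v w ∧ u ≠ w ∧ ¬ G.Adj u w

/-- `T(S)`: the vertices outside `S` having a true twin in `S`. -/
def trueTwinSet (G : SimpleGraph V) (S : Set V) : Set V :=
  {v | v ∉ S ∧ ∃ s ∈ S, closedNbr G v = closedNbr G s}

/-- `τ(G)`: the maximum of `|T(S)|` over all minimum dominating sets `S`. -/
noncomputable def tauNum (G : SimpleGraph V) : ℕ :=
  sSup {n | ∃ S : Set V, Dominating G S ∧ S.ncard = domNum G ∧
    (trueTwinSet G S).ncard = n}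

section Lemmas

variable {G : SimpleGraph V}

lemma mem_closedNbr {v w : V} : w ∈ closedNbr G v ↔ w = v ∨ G.Adj v w := by
  simp [closedNbr]

lemma self_mem_closedNbr (v : V) : v ∈ closedNbr G v := mem_closedNbr.mpr (Or.inl rfl)

lemma adj_mem_closedNbr {v w : V} (h : G.Adj v w) : w ∈ closedNbr G v :=
  mem_closedNbr.mpr (Or.inr h)

lemma mem_closedNbr_symm {v w : V} (h : w ∈ closedNbr G v) : v ∈ closedNbr G w := by
  rcases mem_closedNbr.mp h with h | h
  · exact mem_closedNbr.mpr (Or.inl h.symm)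
  · exact mem_closedNbr.mpr (Or.inr h.symm)

lemma adj_of_mem_closedNbr {v w : V} (h : w ∈ closedNbr G v) (hne : w ≠ v) : G.Adj v w :=
  (mem_closedNbr.mp h).resolve_left hne

/-- existence of a minimum dominating set -/
lemma exists_min_dom (G : SimpleGraph V) :
    ∃ S : Set V, Dominating G S ∧ S.ncard = domNum G := by
  have h : {n | ∃ S : Set V, Dominating G S ∧ S.ncard = n}.Nonempty :=
    ⟨(Set.univ : Set V).ncard, Set.univ, fun v hv => absurd (Set.mem_univ v) hv, rfl⟩
  exact Nat.sInf_mem h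

lemma domNum_le {S : Set V} (hS : Dominating G S) : domNum G ≤ S.ncard :=
  Nat.sInf_le ⟨S, hS, rfl⟩

/-- removing a vertex from a minimum dominating set cannot stay dominating -/
lemma remove_not_dominating [Fintype V] {S : Set V}
    (hcard : S.ncard = domNum G) {s : V} (hs : s ∈ S)
    (h : Dominating G (S \ {s})) : False := by
  have h1 : domNum G ≤ (S \ {s}).ncard := domNum_le h
  have h2 : (S \ {s}).ncard = S.ncard - 1 :=
    Set.ncard_diff_singleton_of_mem hs
  have h3 : 0 < S.ncard := (Set.ncard_pos (Set.toFinite S)).mpr ⟨s, hs⟩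
  omega

/-- Lemma 2: every vertex of a minimum dominating set has a neighbour outside S ∪ T(S). -/
lemma exists_outside_neighbor [Fintype V] (hnc : NoCompleteComponent G)
    {S : Set V} (hS : Dominating G S) (hcard : S.ncard = domNum G) {s : V} (hs : s ∈ S) :
    ∃ u, u ∉ S ∧ u ∉ trueTwinSet G S ∧ G.Adj s u := by
  by_contra hcon
  push_neg at hcon
  -- hcon : ∀ u, u ∉ S → u ∉ T → ¬ adj s u  (after push_neg shape)
  have hcon' : ∀ u, G.Adj s u → u ∈ S ∨ u ∈ trueTwinSet G S := by
    intro u hadj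
    by_contra h
    push_neg at h
    exact (hcon u h.1 h.2) hadj
  by_cases hx : ∃ x ∈ S, G.Adj s x
  · obtain ⟨x, hxS, hsx⟩ := hx
    refine remove_not_dominating hcard hs ?_
    intro w hw
    by_cases hws : w = s
    · subst hws
      exact ⟨x, ⟨hxS, fun h => G.irrefl (h ▸ hsx)⟩, hsx.symm⟩
    · have hwS : w ∉ S := fun h => hw ⟨h, hws⟩
      by_cases hy : ∃ y ∈ S \ {s}, G.Adj y w
      · exact hy
      · push_neg at hy
        -- the only S-neighbour of w is s
        have hsw : G.Adj s w := by
          obtain ⟨y, hyS, hyw⟩ := hS w hwS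
          have : y = s := by
            by_contra hne
            exact hy y ⟨hyS, hne⟩ hyw
          exact this ▸ hyw
        have hwT : w ∈ trueTwinSet G S := (hcon' w hsw).resolve_left hwS
        obtain ⟨-, t, htS, htw⟩ := hwT
        have htmem : t ∈ closedNbr G w := htw ▸ self_mem_closedNbr t
        have htne : t ≠ w := fun h => hwS (h ▸ htS)
        have hadjwt : G.Adj w t := adj_of_mem_closedNbr htmem htne
        have hts : t = s := by
          by_contra hne
          exact hy t ⟨htS, hne⟩ hadjwt.symm
        rw [hts] at htw
        -- N[w] = N[s], so x ∈ N[w]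
        have hxw : x ∈ closedNbr G w := htw ▸ adj_mem_closedNbr hsx
        have hxne : x ≠ w := fun h => hwS (h ▸ hxS)
        have : G.Adj w x := adj_of_mem_closedNbr hxw hxne
        have hxs : x ≠ s := fun h => G.irrefl (h ▸ hsx)
        exact absurd this.symm (hy x ⟨hxS, hxs⟩)
  · -- no S-neighbour of s: every neighbour of s is a twin of s
    push_neg at hx
    have htwin : ∀ t, G.Adj s t → closedNbr G t = closedNbr G s := by
      intro t hadj
      have htS : t ∉ S := fun h => hx t h hadj
      have htT : t ∈ trueTwinSet G S := (hcon' t hadj).resolve_left htS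
      obtain ⟨-, y, hyS, hyt⟩ := htT
      have hsy : s ∈ closedNbr G y := hyt ▸ mem_closedNbr_symm (adj_mem_closedNbr hadj)
      have : y = s := by
        rcases mem_closedNbr.mp hsy with h | h
        · exact h ▸ rfl
        · exact absurd h.symm (hx y hyS)
      exact this ▸ hyt
    -- closure: everything reachable from s lies in N[s]
    have hreach : ∀ x, G.Reachable s x → x ∈ closedNbr G s := by
      intro x hx'
      obtain ⟨p⟩ := hx'
      have : ∀ (a b : V) (p : G.Walk a b), a ∈ closedNbr G s → b ∈ closedNbr G s := by
        intro a b p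
        induction p with
        | nil => exact id
        | @cons a c b h p ih =>
          intro ha
          apply ih
          rcases mem_closedNbr.mp ha with h' | h'
          · exact adj_mem_closedNbr (h' ▸ h)
          · exact (htwin a h') ▸ adj_mem_closedNbr h
      exact this s x p (self_mem_closedNbr s)
    obtain ⟨u, w, hru, hrw, hne, hnadj⟩ := hnc s
    have hu : u ∈ closedNbr G s := hreach u hru
    have hw : w ∈ closedNbr G s := hreach w hrw
    apply hnadj
    rcases mem_closedNbr.mp hu with h | h
    · subst h
      exact adj_of_mem_closedNbr hw hne.symm
    · have : w ∈ closedNbr G u := (htwin u h) ▸ hw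
      exact adj_of_mem_closedNbr this hne.symm

/-- every vertex of S ∪ T(S) has a neighbour outside S ∪ T(S) -/
lemma exists_outside_neighbor' [Fintype V] (hnc : NoCompleteComponent G)
    {S : Set V} (hS : Dominating G S) (hcard : S.ncard = domNum G) {z : V}
    (hz : z ∈ S ∨ z ∈ trueTwinSet G S) :
    ∃ u, u ∉ S ∧ u ∉ trueTwinSet G S ∧ G.Adj z u := by
  rcases hz with hz | hz
  · exact exists_outside_neighbor hnc hS hcard hz
  · obtain ⟨hzS, y, hyS, hyz⟩ := hz
    obtain ⟨u, hu1, hu2, hu3⟩ := exists_outside_neighbor hnc hS hcard hyS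
    have : u ∈ closedNbr G z := hyz ▸ adj_mem_closedNbr hu3
    have hne : u ≠ z := fun h => hu2 (h ▸ (⟨hzS, y, hyS, hyz⟩ : z ∈ trueTwinSet G S))
    exact ⟨u, hu1, hu2, adj_of_mem_closedNbr this hne⟩

end Lemmas

section Main

variable {G : SimpleGraph V}

/-- Main lemma: a good defender exists. -/
lemma exists_good_defender [Fintype V] (hnc : NoCompleteComponent G)
    {S : Set V} (hS : Dominating G S) (hcard : S.ncard = domNum G) {s : V} (hs : s ∈ S) :
    ∃ u, u ∉ S ∧ u ∉ trueTwinSet G S ∧ G.Adj s u ∧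
      ∀ z, (z ∈ S ∨ z ∈ trueTwinSet G S) → z ∉ closedNbr G s →
        ∃ w, w ∉ S ∧ w ∉ trueTwinSet G S ∧ G.Adj z w ∧ w ≠ u := by
  classical
  by_contra hcon
  push_neg at hcon
  -- Step 1: blockers can be taken inside S, adjacent to u.
  have hblock : ∀ u, u ∉ S → u ∉ trueTwinSet G S → G.Adj s u →
      ∃ z, z ∈ S ∧ z ∉ closedNbr G s ∧ G.Adj z u ∧
        ∀ w, w ∉ S → w ∉ trueTwinSet G S → G.Adj z w → w = u := by
    intro u hu1 hu2 hu3
    obtain ⟨z, hzST, hzNs, hzuniq⟩ := hcon u hu1 hu2 hu3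
    obtain ⟨z', hz'S, hz'Ns, hz'uniq⟩ : ∃ z', z' ∈ S ∧ z' ∉ closedNbr G s ∧
        ∀ w, w ∉ S → w ∉ trueTwinSet G S → G.Adj z' w → w = u := by
      rcases hzST with hzS | hzT
      · exact ⟨z, hzS, hzNs, hzuniq⟩
      · obtain ⟨hzS, y, hyS, hyz⟩ := hzT
        refine ⟨y, hyS, ?_, ?_⟩
        · intro hyNs
          apply hzNs
          have hsy : s ∈ closedNbr G y := mem_closedNbr_symm hyNs
          have hsz : s ∈ closedNbr G z := hyz.symm ▸ hsy
          exact mem_closedNbr_symm hsz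
        · intro w hw1 hw2 hw3
          apply hzuniq w hw1 hw2
          have hmem : w ∈ closedNbr G z := hyz.symm ▸ adj_mem_closedNbr hw3
          have hne : w ≠ z := fun h => hw2 (h ▸ (⟨hzS, y, hyS, hyz⟩ : z ∈ trueTwinSet G S))
          exact adj_of_mem_closedNbr hmem hne
    obtain ⟨w, hwa, hwb, hwc⟩ := exists_outside_neighbor hnc hS hcard hz'S
    have hwu : w = u := hz'uniq w hwa hwb hwc
    exact ⟨z', hz'S, hz'Ns, hwu ▸ hwc, hz'uniq⟩
  choose! z hz1 hz2 hz3 hz4 using hblock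
  set U : Set V := {u | u ∉ S ∧ u ∉ trueTwinSet G S ∧ G.Adj s u} with hUdef
  have hzS : ∀ u ∈ U, z u ∈ S := fun u hu => hz1 u hu.1 hu.2.1 hu.2.2
  have hzNs : ∀ u ∈ U, z u ∉ closedNbr G s := fun u hu => hz2 u hu.1 hu.2.1 hu.2.2
  have hzadj : ∀ u ∈ U, G.Adj (z u) u := fun u hu => hz3 u hu.1 hu.2.1 hu.2.2
  have hzuniq : ∀ u ∈ U, ∀ w, w ∉ S → w ∉ trueTwinSet G S → G.Adj (z u) w → w = u :=
    fun u hu => hz4 u hu.1 hu.2.1 hu.2.2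
  obtain ⟨u₀, hu₀1, hu₀2, hu₀3⟩ := exists_outside_neighbor hnc hS hcard hs
  have hu₀U : u₀ ∈ U := ⟨hu₀1, hu₀2, hu₀3⟩
  set Z : Set V := z '' U with hZdef
  set S' : Set V := (S \ Z) ∪ U with hS'def
  have hinj : Set.InjOn z U := by
    intro a ha b hb hab
    exact hzuniq b hb a ha.1 ha.2.1 (hab ▸ hzadj a ha)
  have hZsub : Z ⊆ S := by rintro _ ⟨u, hu, rfl⟩; exact hzS u hu
  have hdisj : Disjoint (S \ Z) U := by
    rw [Set.disjoint_left]
    rintro a ⟨haS, -⟩ haU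
    exact haU.1 haS
  -- S' is dominating
  have hS'dom : Dominating G S' := by
    intro w hw
    have hwU : w ∉ U := fun h => hw (Or.inr h)
    have hwSZ : w ∉ S \ Z := fun h => hw (Or.inl h)
    by_cases hy : ∃ y ∈ S \ Z, G.Adj y w
    · obtain ⟨y, hyS, hyw⟩ := hy
      exact ⟨y, Or.inl hyS, hyw⟩
    · push_neg at hy
      by_cases hwZ : w ∈ Z
      · obtain ⟨u, huU, huw⟩ := hwZ
        exact ⟨u, Or.inr huU, (huw ▸ hzadj u huU).symm⟩
      · have hwS : w ∉ S := fun h => hwSZ ⟨h, hwZ⟩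
        obtain ⟨y, hyS, hyw⟩ := hS w hwS
        have hyZ : y ∈ Z := by
          by_contra h
          exact hy y ⟨hyS, h⟩ hyw
        obtain ⟨u', hu'U, hu'⟩ := hyZ
        by_cases hwT : w ∈ trueTwinSet G S
        · obtain ⟨-, t, htS, htw⟩ := hwT
          have htmem : t ∈ closedNbr G w := htw ▸ self_mem_closedNbr t
          have htne : t ≠ w := fun h => hwS (h ▸ htS)
          have hadjwt : G.Adj w t := adj_of_mem_closedNbr htmem htne
          have htZ : t ∈ Z := by
            by_contra h
            exact hy t ⟨htS, h⟩ hadjwt.symm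
          obtain ⟨u'', hu''U, hu''⟩ := htZ
          have h1 : u'' ∈ closedNbr G t := adj_mem_closedNbr (hu'' ▸ hzadj u'' hu''U)
          have h2 : u'' ∈ closedNbr G w := htw.symm ▸ h1
          have hne : u'' ≠ w := fun h => hwU (h ▸ hu''U)
          exact ⟨u'', Or.inr hu''U, (adj_of_mem_closedNbr h2 hne).symm⟩
        · have hwu' : w = u' := hzuniq u' hu'U w hwS hwT (hu'.symm ▸ hyw)
          exact absurd hu'U (hwu' ▸ hwU)
  -- cardinalities
  have hUZ : Z.ncard = U.ncard := by rw [hZdef]; exact Set.ncard_image_of_injOn hinj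
  have hZle : Z.ncard ≤ S.ncard := Set.ncard_le_ncard hZsub (Set.toFinite _)
  have hcardS' : S'.ncard = S.ncard := by
    rw [hS'def, Set.ncard_union_eq hdisj (Set.toFinite _) (Set.toFinite _),
      Set.ncard_diff hZsub (Set.toFinite _)]
    omega
  have hsZ : s ∉ Z := by
    rintro ⟨u, huU, hu⟩
    exact hzNs u huU (hu.symm ▸ self_mem_closedNbr s)
  have hsS' : s ∈ S' := Or.inl ⟨hs, hsZ⟩
  -- Final blow: S' \ {s} is dominating, contradicting minimality.
  refine remove_not_dominating (hcardS'.trans hcard) hsS' ?_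
  intro w hw
  by_cases hws : w = s
  · subst hws
    refine ⟨u₀, ⟨Or.inr hu₀U, ?_⟩, hu₀3.symm⟩
    intro h
    rw [Set.mem_singleton_iff] at h
    exact hu₀1 (h ▸ hs)
  · have hwS' : w ∉ S' := fun h => hw ⟨h, hws⟩
    by_cases hy : ∃ y ∈ S' \ {s}, G.Adj y w
    · exact hy
    · push_neg at hy
      obtain ⟨y, hyS', hyw⟩ := hS'dom w hwS'
      have hys : y = s := by
        by_contra h
        exact hy y ⟨hyS', h⟩ hyw
      have hsw : G.Adj s w := hys ▸ hyw
      have hwU : w ∉ U := fun h => hwS' (Or.inr h)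
      have hwSZ : w ∉ S \ Z := fun h => hwS' (Or.inl h)
      have hwZ : w ∉ Z := by
        rintro ⟨u, huU, hu⟩
        exact hzNs u huU (hu.symm ▸ adj_mem_closedNbr hsw)
      have hwS : w ∉ S := fun h => hwSZ ⟨h, hwZ⟩
      have hwT : w ∈ trueTwinSet G S := by
        by_contra h
        exact hwU ⟨hwS, h, hsw⟩
      obtain ⟨-, t, htS, htw⟩ := hwT
      have hst : s ∈ closedNbr G t := htw ▸ mem_closedNbr_symm (adj_mem_closedNbr hsw)
      rcases mem_closedNbr.mp hst with hts | hts
      · -- s = t, so N[w] = N[s] and u₀ defends w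
        have hNw : closedNbr G w = closedNbr G s := by rw [htw, ← hts]
        have h1 : u₀ ∈ closedNbr G w := hNw.symm ▸ adj_mem_closedNbr hu₀3
        have hne : u₀ ≠ w := fun h => hwU (h ▸ hu₀U)
        refine ⟨u₀, ⟨Or.inr hu₀U, ?_⟩, (adj_of_mem_closedNbr h1 hne).symm⟩
        intro h
        rw [Set.mem_singleton_iff] at h
        exact hu₀1 (h ▸ hs)
      · -- t adjacent to s, so t ∉ Z and t defends w
        have htZ : t ∉ Z := by
          rintro ⟨u, huU, hu⟩
          exact hzNs u huU (hu.symm ▸ adj_mem_closedNbr hts.symm)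
        have htnew : t ≠ w := fun h => hwS (h ▸ htS)
        have hadj : G.Adj w t := adj_of_mem_closedNbr (htw ▸ self_mem_closedNbr t) htnew
        have hts' : t ≠ s := fun h => G.irrefl (h ▸ hts)
        refine ⟨t, ⟨Or.inl ⟨htS, htZ⟩, ?_⟩, hadj.symm⟩
        intro h
        rw [Set.mem_singleton_iff] at h
        exact hts' h

end Main

theorem stmt13 {V : Type*} [Fintype V] (G : SimpleGraph V)
    (hnc : NoCompleteComponent G) :
    secDomNum G ≤ Fintype.card V - domNum G - tauNum G := by

  classical
  -- obtain a minimum dominating set realizing tauNum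
  obtain ⟨S, hS, hcard, htau⟩ : ∃ S : Set V, Dominating G S ∧ S.ncard = domNum G ∧
      (trueTwinSet G S).ncard = tauNum G := by
    have hne : {n | ∃ S : Set V, Dominating G S ∧ S.ncard = domNum G ∧
        (trueTwinSet G S).ncard = n}.Nonempty := by
      obtain ⟨S, hS, hcard⟩ := exists_min_dom G
      exact ⟨(trueTwinSet G S).ncard, S, hS, hcard, rfl⟩
    have hbdd : BddAbove {n | ∃ S : Set V, Dominating G S ∧ S.ncard = domNum G ∧
        (trueTwinSet G S).ncard = n} := by
      refine ⟨Fintype.card V, ?_⟩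
      rintro n ⟨S, -, -, rfl⟩
      calc (trueTwinSet G S).ncard ≤ (Set.univ : Set V).ncard :=
            Set.ncard_le_ncard (Set.subset_univ _) (Set.toFinite _)
        _ = Fintype.card V := by rw [Set.ncard_univ, Nat.card_eq_fintype_card]
    exact Nat.sSup_mem hne hbdd
  set T : Set V := trueTwinSet G S with hTdef
  set W : Set V := (S ∪ T)ᶜ with hWdef
  have hmemW : ∀ {x : V}, x ∈ W ↔ x ∉ S ∧ x ∉ T := by
    intro x
    simp [hWdef, not_or]
  -- W is dominating
  have hWdom : Dominating G W := by
    intro v hv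
    have hv' : v ∈ S ∨ v ∈ T := by
      by_contra h
      push_neg at h
      exact hv (hmemW.mpr h)
    obtain ⟨u, hu1, hu2, hu3⟩ := exists_outside_neighbor' hnc hS hcard hv'
    exact ⟨u, hmemW.mpr ⟨hu1, hu2⟩, hu3.symm⟩
  -- W is secure dominating
  have hWsec : SecureDominating G W := by
    refine ⟨hWdom, ?_⟩
    intro v hv
    have hv' : v ∈ S ∨ v ∈ T := by
      by_contra h
      push_neg at h
      exact hv (hmemW.mpr h)
    -- representative in S with the same closed neighbourhood
    obtain ⟨s, hsS, hsv⟩ : ∃ s, s ∈ S ∧ closedNbr G v = closedNbr G s := by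
      rcases hv' with h | h
      · exact ⟨v, h, rfl⟩
      · obtain ⟨-, s, hsS, hsv⟩ := h
        exact ⟨s, hsS, hsv⟩
    obtain ⟨u, hu1, hu2, hu3, hprop⟩ := exists_good_defender hnc hS hcard hsS
    have huW : u ∈ W := hmemW.mpr ⟨hu1, hu2⟩
    have huv : G.Adj u v := by
      have h1 : u ∈ closedNbr G v := hsv.symm ▸ adj_mem_closedNbr hu3
      have hne : u ≠ v := by
        intro h
        rcases hv' with h' | h'
        · exact hu1 (h ▸ h')
        · exact hu2 (h ▸ h')
      exact (adj_of_mem_closedNbr h1 hne).symm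
    refine ⟨u, huW, huv, ?_⟩
    intro w hw
    by_cases hwv : G.Adj v w
    · exact ⟨v, Or.inr rfl, hwv⟩
    · have hwne : w ≠ v := fun h => hw (Or.inr (h ▸ rfl))
      have hwW : w ∉ W := by
        intro h
        by_cases hwu : w = u
        · exact hwv (hwu ▸ huv.symm)
        · exact hw (Or.inl ⟨h, hwu⟩)
      have hw' : w ∈ S ∨ w ∈ T := by
        by_contra h
        push_neg at h
        exact hwW (hmemW.mpr h)
      have hwNs : w ∉ closedNbr G s := by
        intro h
        have : w ∈ closedNbr G v := hsv.symm ▸ h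
        rcases mem_closedNbr.mp this with h' | h'
        · exact hwne h'
        · exact hwv h'
      obtain ⟨w', hw'1, hw'2, hw'3, hw'4⟩ := hprop w hw' hwNs
      refine ⟨w', Or.inl ⟨hmemW.mpr ⟨hw'1, hw'2⟩, ?_⟩, hw'3.symm⟩
      intro h
      rw [Set.mem_singleton_iff] at h
      exact hw'4 h
  -- counting
  have hsec : secDomNum G ≤ W.ncard := Nat.sInf_le ⟨W, hWsec, rfl⟩
  have hdisj : Disjoint S T := by
    rw [Set.disjoint_left]
    intro a haS haT
    exact haT.1 haS
  have hST : (S ∪ T).ncard = domNum G + tauNum G := by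
    rw [Set.ncard_union_eq hdisj (Set.toFinite _) (Set.toFinite _), hcard, htau]
  have hcompl : (S ∪ T).ncard + W.ncard = Fintype.card V := by
    rw [hWdef, Set.ncard_add_ncard_compl _ (Set.toFinite _) (Set.toFinite _),
      Nat.card_eq_fintype_card]
  omega
end

section
/- For any graph G, γ_s(G) ≤ θ(G), the clique covering number of G. -/
open Finset

variable {V : Type*}

/-- The clique covering number `θ(G)`: the minimum number of cliques needed to
cover the vertex set of `G`. -/
noncomputable def cliqueCoverNum (G : SimpleGraph V) : ℕ :=
  sInf {n | ∃ F : Fin n → Set V, (∀ i, G.IsClique (F i)) ∧ ∀ v, ∃ i, v ∈ F i}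

theorem stmt15 {V : Type*} [Fintype V] (G : SimpleGraph V) :
    secDomNum G ≤ cliqueCoverNum G := by
  classical
  cases isEmpty_or_nonempty V with
  | inl h =>
    have hS : SecureDominating G (∅ : Set V) := by
      constructor
      · intro v _; exact (h.false v).elim
      · intro v _; exact (h.false v).elim
    have : secDomNum G ≤ 0 := Nat.sInf_le ⟨∅, hS, Set.ncard_empty V⟩
    omega
  | inr hV =>
    have hne : {n | ∃ F : Fin n → Set V, (∀ i, G.IsClique (F i)) ∧ ∀ v, ∃ i, v ∈ F i}.Nonempty := by
      refine ⟨Fintype.card V, fun i => {(Fintype.equivFin V).symm i}, ?_, ?_⟩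
      · intro i; exact Set.pairwise_singleton _ _
      · intro v; exact ⟨Fintype.equivFin V v, by simp⟩
    obtain ⟨F, hF, hcov⟩ := Nat.sInf_mem hne
    set n := cliqueCoverNum G with hn
    choose c hc using hcov
    set r : Fin n → V := fun i => Function.invFun c i with hr
    have hcr : ∀ i ∈ Set.range c, c (r i) = i := by
      intro i hi
      exact Function.invFun_eq hi
    set S : Set V := r '' Set.range c with hSdef
    have hmem : ∀ v : V, r (c v) ∈ S := fun v => ⟨c v, ⟨v, rfl⟩, rfl⟩
    have hadj : ∀ x y : V, c x = c y → x ≠ y → G.Adj x y := by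
      intro x y hxy hne2
      have hx : x ∈ F (c y) := hxy ▸ hc x
      exact hF (c y) hx (hc y) hne2
    have hcrc : ∀ v : V, c (r (c v)) = c v := fun v => hcr (c v) ⟨v, rfl⟩
    have hdom : Dominating G S := by
      intro v hv
      refine ⟨r (c v), hmem v, hadj _ _ (hcrc v) ?_⟩
      intro heq; exact hv (heq ▸ hmem v)
    have hsec : SecureDominating G S := by
      refine ⟨hdom, ?_⟩
      intro v hv
      set u := r (c v) with hu
      have huv : G.Adj u v := by
        refine hadj _ _ (hcrc v) ?_
        intro heq; exact hv (heq ▸ hmem v)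
      refine ⟨u, hmem v, huv, ?_⟩
      intro w hw
      by_cases hcw : c w = c v
      · refine ⟨v, Or.inr rfl, hadj _ _ hcw.symm ?_⟩
        intro heq; exact hw (heq ▸ Or.inr rfl)
      · refine ⟨r (c w), Or.inl ⟨hmem w, ?_⟩, hadj _ _ (hcrc w) ?_⟩
        · intro heq
          apply hcw
          have := hcrc w
          rw [Set.mem_singleton_iff] at heq
          rw [heq] at this
          rw [← this, hcrc v]
        · intro heq; exact hw (heq ▸ Or.inl ⟨hmem w, by
            intro h2
            apply hcw
            rw [Set.mem_singleton_iff] at h2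
            have := hcrc w
            rw [h2] at this
            rw [← this, hcrc v]⟩)
    have hcard : S.ncard ≤ n := by
      calc S.ncard ≤ (Set.range c).ncard := Set.ncard_image_le (Set.range c).toFinite
        _ ≤ (Set.univ : Set (Fin n)).ncard := Set.ncard_le_ncard (Set.subset_univ _) Set.finite_univ
        _ = n := by simp [Set.ncard_univ]
    exact le_trans (Nat.sInf_le ⟨S, hsec, rfl⟩) hcard
end

section
/- For any graph G, γ_s(G) + γ_s(Ḡ) ≤ n(G) + 1 and γ_s(G)·γ_s(Ḡ) ≤ (n(G)+1)²/4, where Ḡ is the complement of G. -/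
open Finset

variable {V : Type*}

section NGHelpers
variable {V : Type*} [DecidableEq V]

attribute [local instance] Classical.propDecidable


/-- `f` picks a representative for each vertex of `s`, with fibers being cliques of `G`. -/
def RepFun (G : SimpleGraph V) (s : Finset V) (f : V → V) : Prop :=
  (∀ v ∈ s, f v ∈ s) ∧ (∀ v ∈ s, f (f v) = f v) ∧
    ∀ u ∈ s, ∀ v ∈ s, f u = f v → u = v ∨ G.Adj u v

lemma repFun_extend (G : SimpleGraph V) {s : Finset V} {a : V} (ha : a ∉ s)
    {f : V → V} (hf : RepFun G s f) :
    ∃ f', RepFun G (insert a s) f' ∧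
      ((insert a s).image f').card ≤ (s.image f).card + 1 ∧
      (((insert a s).image f').card ≤ (s.image f).card ∨
        (s.image f).card ≤ (s.filter (fun u => ¬ G.Adj a u)).card) := by
  obtain ⟨h1, h2, h3⟩ := hf
  have himg : ∀ r : V, (s.image (Function.update f a r)) = s.image f := by
    intro r
    apply Finset.image_congr
    intro u hu
    exact Function.update_of_ne (fun h => ha (by rwa [h] at hu)) _ _
  by_cases hc : ∃ r ∈ s.image f, ∀ u ∈ s, f u = r → G.Adj a u
  · obtain ⟨r, hr, hall⟩ := hc
    obtain ⟨w, hw, hwr⟩ := Finset.mem_image.mp hr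
    have hrs : r ∈ s := hwr ▸ h1 w hw
    have hra : r ≠ a := fun h => ha (h ▸ hrs)
    have hfr : f r = r := by rw [← hwr]; rw [← hwr] at *; exact h2 w hw
    set f' := Function.update f a r with hf'
    have hfa : f' a = r := Function.update_self _ _ _
    have hfs : ∀ u ∈ s, f' u = f u := fun u hu =>
      Function.update_of_ne (fun h => ha (by rwa [h] at hu)) _ _
    have himg' : (insert a s).image f' = s.image f := by
      rw [Finset.image_insert, hfa, himg, Finset.insert_eq_of_mem hr]
    refine ⟨f', ⟨?_, ?_, ?_⟩, ?_, ?_⟩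
    · intro v hv
      rcases Finset.mem_insert.mp hv with h | h
      · subst h; rw [hfa]; exact Finset.mem_insert_of_mem hrs
      · rw [hfs v h]; exact Finset.mem_insert_of_mem (h1 v h)
    · intro v hv
      rcases Finset.mem_insert.mp hv with h | h
      · subst h; rw [hfa, hfs r hrs, hfr]
      · rw [hfs v h, hfs _ (h1 v h)]; exact h2 v h
    · intro u hu v hv huv
      rcases Finset.mem_insert.mp hu with h | h <;> rcases Finset.mem_insert.mp hv with h' | h'
      · left; rw [h, h']
      · subst h; rw [hfa, hfs v h'] at huv
        right; exact hall v h' huv.symm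
      · subst h'; rw [hfa, hfs u h] at huv
        right; exact (hall u h huv).symm
      · rw [hfs u h, hfs v h'] at huv; exact h3 u h v h' huv
    · rw [himg']; omega
    · left; rw [himg']
  · push_neg at hc
    set f' := Function.update f a a with hf'
    have hfa : f' a = a := Function.update_self _ _ _
    have hfs : ∀ u ∈ s, f' u = f u := fun u hu =>
      Function.update_of_ne (fun h => ha (by rwa [h] at hu)) _ _
    have himg' : (insert a s).image f' = insert a (s.image f) := by
      rw [Finset.image_insert, hfa, himg]
    refine ⟨f', ⟨?_, ?_, ?_⟩, ?_, ?_⟩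
    · intro v hv
      rcases Finset.mem_insert.mp hv with h | h
      · subst h; rw [hfa]; exact Finset.mem_insert_self _ _
      · rw [hfs v h]; exact Finset.mem_insert_of_mem (h1 v h)
    · intro v hv
      rcases Finset.mem_insert.mp hv with h | h
      · subst h; rw [hfa, hfa]
      · rw [hfs v h, hfs _ (h1 v h)]; exact h2 v h
    · intro u hu v hv huv
      rcases Finset.mem_insert.mp hu with h | h <;> rcases Finset.mem_insert.mp hv with h' | h'
      · left; rw [h, h']
      · subst h; rw [hfa, hfs v h'] at huv
        exact absurd (h1 v h') (by rw [← huv]; exact ha)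
      · subst h'; rw [hfa, hfs u h] at huv
        exact absurd (h1 u h) (by rw [huv]; exact ha)
      · rw [hfs u h, hfs v h'] at huv; exact h3 u h v h' huv
    · rw [himg']; exact (Finset.card_insert_le _ _).trans (by omega)
    · right
      have hch : ∀ r ∈ s.image f, ∃ u, u ∈ s ∧ f u = r ∧ ¬ G.Adj a u := by
        intro r hr
        obtain ⟨u, hu, h1', h2'⟩ := hc r hr
        exact ⟨u, hu, h1', h2'⟩
      classical
      choose φ hφ using hch
      set ψ : V → V := fun r => if h : r ∈ s.image f then φ r h else a with hψ
      apply Finset.card_le_card_of_injOn ψ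
      · intro r hr
        simp only [hψ, dif_pos (show r ∈ s.image f from hr)]
        exact Finset.mem_filter.mpr ⟨(hφ r hr).1, (hφ r hr).2.2⟩
      · intro r1 hr1 r2 hr2 heq
        simp only [Finset.coe_image, Set.mem_image] at hr1 hr2
        have hr1' : r1 ∈ s.image f := by simpa [Finset.mem_image] using hr1
        have hr2' : r2 ∈ s.image f := by simpa [Finset.mem_image] using hr2
        simp only [hψ, dif_pos hr1', dif_pos hr2'] at heq
        rw [← (hφ r1 hr1').2.1, ← (hφ r2 hr2').2.1, heq]

lemma exists_repFun_pair (G H : SimpleGraph V)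
    (hcov : ∀ u v : V, u ≠ v → G.Adj u v ∨ H.Adj u v) (s : Finset V) :
    ∃ f g : V → V, RepFun G s f ∧ RepFun H s g ∧
      (s.image f).card + (s.image g).card ≤ s.card + 1 := by
  induction s using Finset.induction_on with
  | empty =>
      exact ⟨id, id, ⟨by simp, by simp, by simp⟩, ⟨by simp, by simp, by simp⟩, by simp⟩
  | @insert a s ha ih =>
      obtain ⟨f, g, hf, hg, hsum⟩ := ih
      obtain ⟨f', hf', hf1, hf2⟩ := repFun_extend G ha hf
      obtain ⟨g', hg', hg1, hg2⟩ := repFun_extend H ha hg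
      refine ⟨f', g', hf', hg', ?_⟩
      rw [Finset.card_insert_of_notMem ha]
      rcases hf2 with h | hcf
      · omega
      rcases hg2 with h | hcg
      · omega
      have hdisj : Disjoint (s.filter (fun u => ¬ G.Adj a u)) (s.filter (fun u => ¬ H.Adj a u)) := by
        rw [Finset.disjoint_left]
        intro u hu1 hu2
        have h1 := Finset.mem_filter.mp hu1
        have h2 := Finset.mem_filter.mp hu2
        have : u ≠ a := fun h => ha (h ▸ h1.1)
        rcases hcov a u (Ne.symm this) with h | h
        · exact h1.2 h
        · exact h2.2 h
      have hle : (s.filter (fun u => ¬ G.Adj a u)).card + (s.filter (fun u => ¬ H.Adj a u)).card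
          ≤ s.card := by
        rw [← Finset.card_union_of_disjoint hdisj]
        exact Finset.card_le_card (Finset.union_subset (Finset.filter_subset _ _)
          (Finset.filter_subset _ _))
      omega


lemma secureDominating_of_repFun [Fintype V] (G : SimpleGraph V) {f : V → V}
    (hf : RepFun G Finset.univ f) :
    SecureDominating G ↑(Finset.univ.image f) := by
  obtain ⟨h1, h2, h3⟩ := hf
  have hmem : ∀ v : V, f v ∈ (Finset.univ.image f : Finset V) := fun v =>
    Finset.mem_image_of_mem f (Finset.mem_univ v)
  have hmem' : ∀ v : V, f v ∈ (↑(Finset.univ.image f) : Set V) := fun v => by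
    simpa using hmem v
  have hadj : ∀ v : V, v ∉ (↑(Finset.univ.image f) : Set V) → G.Adj (f v) v := by
    intro v hv
    rcases h3 (f v) (mem_univ _) v (mem_univ _) (h2 v (mem_univ v)) with h | h
    · exact absurd (h ▸ hmem' v) hv
    · exact h
  constructor
  · intro v hv
    exact ⟨f v, hmem' v, hadj v hv⟩
  · intro v hv
    refine ⟨f v, hmem' v, hadj v hv, ?_⟩
    intro w hw
    simp only [Set.mem_union, Set.mem_diff, Set.mem_singleton_iff, not_or, not_and] at hw
    push_neg at hw
    obtain ⟨hw1, hw2⟩ := hw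
    by_cases hfw : f w = f v
    · rcases h3 w (mem_univ _) v (mem_univ _) hfw with h | h
      · exact absurd h hw2
      · exact ⟨v, Or.inr rfl, h.symm⟩
    · refine ⟨f w, Or.inl ⟨hmem' w, hfw⟩, ?_⟩
      rcases h3 (f w) (mem_univ _) w (mem_univ _) (h2 w (mem_univ w)) with h | h
      · exfalso
        apply hfw
        have hwv : w = f v := hw1 (by rw [← h]; exact hmem' w)
        rw [hwv]
        exact h2 v (mem_univ v)
      · exact h

lemma secDomNum_le_of_repFun [Fintype V] (G : SimpleGraph V) {f : V → V}
    (hf : RepFun G Finset.univ f) :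
    secDomNum G ≤ (Finset.univ.image f).card :=
  Nat.sInf_le ⟨↑(Finset.univ.image f), secureDominating_of_repFun G hf,
    by rw [Set.ncard_coe_finset]⟩


end NGHelpers

theorem stmt16 {V : Type*} [Fintype V] (G : SimpleGraph V) :
    secDomNum G + secDomNum Gᶜ ≤ Fintype.card V + 1 ∧
      ((secDomNum G * secDomNum Gᶜ : ℚ)) ≤ ((Fintype.card V : ℚ) + 1) ^ 2 / 4 := by
  classical
  have hcov : ∀ u v : V, u ≠ v → G.Adj u v ∨ Gᶜ.Adj u v := by
    intro u v huv
    by_cases h : G.Adj u v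
    · exact Or.inl h
    · exact Or.inr ((G.compl_adj u v).mpr ⟨huv, h⟩)
  obtain ⟨f, g, hf, hg, hsum⟩ := exists_repFun_pair G Gᶜ hcov Finset.univ
  have ha := secDomNum_le_of_repFun G hf
  have hb := secDomNum_le_of_repFun Gᶜ hg
  rw [Finset.card_univ] at hsum
  have hsum' : secDomNum G + secDomNum Gᶜ ≤ Fintype.card V + 1 := by omega
  refine ⟨hsum', ?_⟩
  have hQ : ((secDomNum G : ℚ)) + (secDomNum Gᶜ : ℚ) ≤ (Fintype.card V : ℚ) + 1 := by
    exact_mod_cast hsum'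
  have h0 : (0:ℚ) ≤ (secDomNum G : ℚ) := Nat.cast_nonneg _
  have h0' : (0:ℚ) ≤ (secDomNum Gᶜ : ℚ) := Nat.cast_nonneg _
  nlinarith [sq_nonneg ((secDomNum G : ℚ) - (secDomNum Gᶜ : ℚ)), sq_nonneg ((secDomNum G : ℚ) + (secDomNum Gᶜ : ℚ))]
end

section
/- For any graphs G and H, min{n(G), n(H)} ≤ γ_r(G □ H) ≤ min{n(G)·γ_r(H), n(H)·γ_r(G)}, where □ denotes the Cartesian product. -/
open Finset

variable {V : Type*}

lemma wrdf_one [DecidableEq V] (G : SimpleGraph V) : IsWRDF G (fun _ => 1) :=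
  ⟨fun _ => one_le_two, fun _ h => by simp at h⟩

lemma weakRomanNum_mem [Fintype V] [DecidableEq V] (G : SimpleGraph V) :
    ∃ f : V → ℕ, IsWRDF G f ∧ ∑ v, f v = weakRomanNum G := by
  have h : {n | ∃ f : V → ℕ, IsWRDF G f ∧ ∑ v, f v = n}.Nonempty :=
    ⟨∑ _v : V, 1, fun _ => 1, wrdf_one G, rfl⟩
  exact Nat.sInf_mem h

lemma isWRDF_lift_snd {α β : Type*} [DecidableEq α] [DecidableEq β]
    (G : SimpleGraph α) (H : SimpleGraph β) {f : β → ℕ} (hf : IsWRDF H f) :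
    IsWRDF (G.boxProd H) (fun p => f p.2) := by
  refine ⟨fun v => hf.1 v.2, ?_⟩
  rintro ⟨a, b⟩ hb
  obtain ⟨u, hub, hu1, hmove⟩ := hf.2 b hb
  refine ⟨(a, u), SimpleGraph.boxProd_adj_right.2 hub, hu1, ?_⟩
  rintro ⟨x, y⟩ ⟨h0, hnbr⟩
  have key : ∀ z : β,
      Function.update (Function.update (fun p : α × β => f p.2) (a, u) (f u - 1)) (a, b) 1 (x, z)
      = if x = a then Function.update (Function.update f u (f u - 1)) b 1 z else f z := by
    intro z
    by_cases hx : x = a <;>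
      simp [Function.update_apply, Prod.ext_iff, hx]
  by_cases hx : x = a
  · subst hx
    refine hmove y ⟨?_, ?_⟩
    · have hk := key y
      rw [if_pos rfl] at hk
      rw [← hk]; exact h0
    · intro d hd
      have hv := hnbr (x, d) (SimpleGraph.boxProd_adj_right.2 hd)
      have hk := key d
      rw [if_pos rfl] at hk
      rw [← hk]; exact hv
  · have hy0 : f y = 0 := by
      have hk := key y
      rw [if_neg hx] at hk
      rw [← hk]; exact h0
    obtain ⟨u', hu', h1', _⟩ := hf.2 y hy0
    have hv := hnbr (x, u') (SimpleGraph.boxProd_adj_right.2 hu')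
    have hk := key u'
    rw [if_neg hx] at hk
    rw [hk] at hv
    omega

lemma isWRDF_lift_fst {α β : Type*} [DecidableEq α] [DecidableEq β]
    (G : SimpleGraph α) (H : SimpleGraph β) {g : α → ℕ} (hg : IsWRDF G g) :
    IsWRDF (G.boxProd H) (fun p => g p.1) := by
  refine ⟨fun v => hg.1 v.1, ?_⟩
  rintro ⟨a, b⟩ ha
  obtain ⟨u, hua, hu1, hmove⟩ := hg.2 a ha
  refine ⟨(u, b), SimpleGraph.boxProd_adj_left.2 hua, hu1, ?_⟩
  rintro ⟨x, y⟩ ⟨h0, hnbr⟩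
  have key : ∀ z : α,
      Function.update (Function.update (fun p : α × β => g p.1) (u, b) (g u - 1)) (a, b) 1 (z, y)
      = if y = b then Function.update (Function.update g u (g u - 1)) a 1 z else g z := by
    intro z
    by_cases hy : y = b <;>
      simp [Function.update_apply, Prod.ext_iff, hy]
  by_cases hy : y = b
  · subst hy
    refine hmove x ⟨?_, ?_⟩
    · have hk := key x
      rw [if_pos rfl] at hk
      rw [← hk]; exact h0
    · intro d hd
      have hv := hnbr (d, y) (SimpleGraph.boxProd_adj_left.2 hd)
      have hk := key d
      rw [if_pos rfl] at hk
      rw [← hk]; exact hv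
  · have hx0 : g x = 0 := by
      have hk := key x
      rw [if_neg hy] at hk
      rw [← hk]; exact h0
    obtain ⟨u', hu', h1', _⟩ := hg.2 x hx0
    have hv := hnbr (u', y) (SimpleGraph.boxProd_adj_left.2 hu')
    have hk := key u'
    rw [if_neg hy] at hk
    rw [hk] at hv
    omega

theorem stmt17 {α β : Type*} [Fintype α] [Fintype β] [DecidableEq α] [DecidableEq β]
    (G : SimpleGraph α) (H : SimpleGraph β) :
    min (Fintype.card α) (Fintype.card β) ≤ weakRomanNum (G.boxProd H) ∧
      weakRomanNum (G.boxProd H) ≤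
        min (Fintype.card α * weakRomanNum H) (Fintype.card β * weakRomanNum G) := by
  constructor
  · -- lower bound
    obtain ⟨F, hF, hsum⟩ := weakRomanNum_mem (G.boxProd H)
    set D : Finset (α × β) := univ.filter (fun p => F p ≠ 0) with hD
    have hDcard : D.card ≤ weakRomanNum (G.boxProd H) := by
      calc D.card = ∑ p ∈ D, 1 := by simp
        _ ≤ ∑ p ∈ D, F p :=
            Finset.sum_le_sum fun p hp => Nat.one_le_iff_ne_zero.2 (Finset.mem_filter.1 hp).2
        _ ≤ ∑ p, F p := Finset.sum_le_sum_of_subset (Finset.filter_subset _ _)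
        _ = _ := hsum
    have hdom : ∀ p : α × β, F p = 0 → ∃ q, (G.boxProd H).Adj q p ∧ F q ≠ 0 := by
      intro p hp
      obtain ⟨q, hq, h1, _⟩ := hF.2 p hp
      exact ⟨q, hq, by omega⟩
    by_cases hall : ∀ a : α, ∃ b : β, F (a, b) ≠ 0
    · choose bsel hbsel using hall
      have hc : Fintype.card α ≤ D.card := by
        rw [← Finset.card_univ]
        apply Finset.card_le_card_of_injOn (fun a => (a, bsel a))
        · intro a _
          simp [hD, hbsel a]
        · intro a _ a' _ h
          exact (Prod.ext_iff.1 h).1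
      exact le_trans (min_le_left _ _) (hc.trans hDcard)
    · push_neg at hall
      obtain ⟨a, ha⟩ := hall
      have hcol : ∀ b : β, ∃ a', F (a', b) ≠ 0 := by
        intro b
        obtain ⟨⟨q1, q2⟩, hq, hq0⟩ := hdom (a, b) (ha b)
        rcases SimpleGraph.boxProd_adj.1 hq with ⟨_, he⟩ | ⟨_, he⟩
        · dsimp at he; subst he; exact ⟨q1, hq0⟩
        · dsimp at he; subst he; exact absurd (ha q2) hq0
      choose asel hasel using hcol
      have hc : Fintype.card β ≤ D.card := by
        rw [← Finset.card_univ]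
        apply Finset.card_le_card_of_injOn (fun b => (asel b, b))
        · intro b _
          simp [hD, hasel b]
        · intro b _ b' _ h
          exact (Prod.ext_iff.1 h).2
      exact le_trans (min_le_right _ _) (hc.trans hDcard)
  · -- upper bound
    apply le_min
    · obtain ⟨f, hf, hsum⟩ := weakRomanNum_mem H
      apply Nat.sInf_le
      refine ⟨fun p => f p.2, isWRDF_lift_snd G H hf, ?_⟩
      rw [Fintype.sum_prod_type]
      simp [hsum, Finset.sum_const]
    · obtain ⟨g, hg, hsum⟩ := weakRomanNum_mem G
      apply Nat.sInf_le
      refine ⟨fun p => g p.1, isWRDF_lift_fst G H hg, ?_⟩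
      rw [Fintype.sum_prod_type]
      simp only [Finset.sum_const, smul_eq_mul]
      rw [← Finset.mul_sum, hsum, Finset.card_univ]
end

section
/- If H is a graph with 2 ≤ n(H) ≤ t, then γ_r(K_t □ H) = γ_s(K_t □ H) = n(H). -/
open Finset

variable {V : Type*}

section Aux

variable {W : Type*} [Fintype W] [DecidableEq W] {t : ℕ} {H : SimpleGraph W}

lemma aux_adj_col {i j : Fin t} {w : W} (hij : j ≠ i) :
    ((SimpleGraph.completeGraph (Fin t)).boxProd H).Adj (j, w) (i, w) := by
  rw [SimpleGraph.boxProd_adj]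
  exact Or.inl ⟨hij, rfl⟩

/-- Lower bound: any dominating set of `K_t □ H` has at least `min t (card W) = card W`
vertices. -/
lemma aux_dom_lower (ht : Fintype.card W ≤ t) {S : Set (Fin t × W)}
    (hS : Dominating ((SimpleGraph.completeGraph (Fin t)).boxProd H) S) :
    Fintype.card W ≤ S.ncard := by
  by_cases hall : ∀ w : W, ∃ i : Fin t, (i, w) ∈ S
  · choose i hi using hall
    have hinj : Function.Injective (fun w => (⟨(i w, w), hi w⟩ : S)) := by
      intro a b hab
      rw [Subtype.ext_iff, Prod.ext_iff] at hab
      exact hab.2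
    calc Fintype.card W = Nat.card W := Nat.card_eq_fintype_card.symm
      _ ≤ Nat.card S := Nat.card_le_card_of_injective _ hinj
      _ = S.ncard := Nat.card_coe_set_eq S
  · push_neg at hall
    obtain ⟨w, hw⟩ := hall
    have hpick : ∀ i : Fin t, ∃ w' : W, (i, w') ∈ S := by
      intro i
      obtain ⟨u, huS, hadj⟩ := hS (i, w) (hw i)
      rw [SimpleGraph.boxProd_adj] at hadj
      rcases hadj with ⟨_, h2⟩ | ⟨_, h2⟩
      · exact absurd (show (u.1, w) ∈ S by
          rw [← show u.2 = w from h2]; simpa using huS) (hw u.1)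
      · exact ⟨u.2, by rw [← show u.1 = i from h2]; simpa using huS⟩
    choose w' hmem using hpick
    have hinj : Function.Injective (fun i => (⟨(i, w' i), hmem i⟩ : S)) := by
      intro a b hab
      rw [Subtype.ext_iff, Prod.ext_iff] at hab
      exact hab.1
    calc Fintype.card W ≤ t := ht
      _ = Nat.card (Fin t) := by simp
      _ ≤ Nat.card S := Nat.card_le_card_of_injective _ hinj
      _ = S.ncard := Nat.card_coe_set_eq S

end Aux

theorem stmt18 {W : Type*} [Fintype W] [DecidableEq W] (t : ℕ) (H : SimpleGraph W)
    (h2 : 2 ≤ Fintype.card W) (ht : Fintype.card W ≤ t) :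
    weakRomanNum ((SimpleGraph.completeGraph (Fin t)).boxProd H) = Fintype.card W ∧
      secDomNum ((SimpleGraph.completeGraph (Fin t)).boxProd H) = Fintype.card W := by
  classical
  obtain ⟨g⟩ : Nonempty (W ↪ Fin t) :=
    Function.Embedding.nonempty_of_card_le (by simpa using ht)
  set G := (SimpleGraph.completeGraph (Fin t)).boxProd H with hG
  have hadjc : ∀ (i j : Fin t) (w : W), j ≠ i → G.Adj (j, w) (i, w) := fun _ _ _ h =>
    aux_adj_col h
  -- the canonical secure dominating set
  set S0 : Set (Fin t × W) := Set.range (fun w : W => (g w, w)) with hS0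
  have hmem : ∀ (i : Fin t) (w : W), (i, w) ∈ S0 ↔ i = g w := by
    intro i w
    simp only [hS0, Set.mem_range, Prod.mk.injEq]
    constructor
    · rintro ⟨y, h1, rfl⟩; exact h1.symm
    · rintro rfl; exact ⟨w, rfl, rfl⟩
  have hS0card : S0.ncard = Fintype.card W := by
    have hinj : Function.Injective (fun w : W => ((g w, w) : Fin t × W)) := by
      intro a b hab; simpa using congrArg Prod.snd hab
    rw [← Nat.card_coe_set_eq, hS0, Nat.card_range_of_injective hinj,
      Nat.card_eq_fintype_card]
  have hS0dom : Dominating G S0 := by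
    rintro ⟨i, w⟩ hv
    refine ⟨(g w, w), (hmem _ _).2 rfl, hadjc _ _ _ ?_⟩
    intro h; exact hv ((hmem _ _).2 h.symm)
  have hS0sec : SecureDominating G S0 := by
    refine ⟨hS0dom, ?_⟩
    rintro ⟨i, w⟩ hv
    have hig : i ≠ g w := fun h => hv ((hmem _ _).2 h)
    refine ⟨(g w, w), (hmem _ _).2 rfl, hadjc _ _ _ (Ne.symm hig), ?_⟩
    rintro ⟨j, w'⟩ hx
    rw [Set.mem_union, Set.mem_diff, Set.mem_singleton_iff] at hx
    push_neg at hx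
    obtain ⟨hx1, hx2⟩ := hx
    by_cases hww : w' = w
    · subst hww
      have hji : j ≠ i := fun h => hx2 (by rw [h]; rfl)
      exact ⟨(i, w'), Or.inr rfl, hadjc _ _ _ (fun h => hji h.symm)⟩
    · have hy : ((g w', w') : Fin t × W) ∈ (S0 \ {(g w, w)}) ∪ {(i, w)} := by
        refine Or.inl ⟨(hmem _ _).2 rfl, ?_⟩
        simp only [Set.mem_singleton_iff, Prod.ext_iff]
        rintro ⟨_, h⟩; exact hww h
      refine ⟨(g w', w'), hy, hadjc _ _ _ ?_⟩
      intro h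
      rcases hx1 ((hmem _ _).2 h.symm) with h'
      exact hww (congrArg Prod.snd h')
  -- the canonical WRDF
  set f : Fin t × W → ℕ := fun p => if p.1 = g p.2 then 1 else 0 with hf
  have hfsum : ∑ v, f v = Fintype.card W := by
    rw [Fintype.sum_prod_type_right]
    have : ∀ w : W, (∑ i : Fin t, f (i, w)) = 1 := by
      intro w
      simp only [hf]
      rw [Finset.sum_ite_eq' Finset.univ (g w) (fun _ => 1)]
      simp
    simp [this]
  have hWRDF : IsWRDF G f := by
    constructor
    · intro v; simp only [hf]; split <;> omega
    · rintro ⟨i, w⟩ hv0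
      have hig : i ≠ g w := by
        intro h; simp [hf, h] at hv0
      have hfu : f (g w, w) = 1 := by simp [hf]
      refine ⟨(g w, w), hadjc _ _ _ (Ne.symm hig), by omega, ?_⟩
      rintro ⟨j, w'⟩ ⟨h0, hall⟩
      set f' := Function.update (Function.update f (g w, w) (f (g w, w) - 1)) (i, w) 1 with hf'
      have hval : ∀ x : Fin t × W, f' x =
          if x = (i, w) then 1 else if x = (g w, w) then 0 else f x := by
        intro x
        rw [hf', Function.update_apply, Function.update_apply, hfu]
      by_cases hww : w' = w
      · subst hww
        by_cases hji : j = i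
        · subst hji
          rw [hval] at h0; simp at h0
        · have := hall (i, w') (hadjc _ _ _ (Ne.symm hji))
          rw [hval] at this; simp at this
      · by_cases hjg : j = g w'
        · rw [hval] at h0
          rw [if_neg, if_neg] at h0
          · simp [hf, hjg] at h0
          · simp only [Prod.ext_iff]; rintro ⟨_, h⟩; exact hww h
          · simp only [Prod.ext_iff]; rintro ⟨_, h⟩; exact hww h
        · have := hall (g w', w') (hadjc _ _ _ (fun h => hjg h.symm))
          rw [hval] at this
          rw [if_neg, if_neg] at this
          · simp [hf] at this
          · simp only [Prod.ext_iff]; rintro ⟨_, h⟩; exact hww h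
          · simp only [Prod.ext_iff]; rintro ⟨_, h⟩; exact hww h
  constructor
  · apply le_antisymm
    · exact Nat.sInf_le ⟨f, hWRDF, hfsum⟩
    · refine le_csInf ⟨Fintype.card W, f, hWRDF, hfsum⟩ ?_
      rintro n ⟨f', hf', rfl⟩
      set F : Finset (Fin t × W) := Finset.univ.filter (fun v => f' v ≠ 0) with hF
      have hdom : Dominating G (↑F : Set (Fin t × W)) := by
        intro v hv
        have hv0 : f' v = 0 := by
          by_contra h
          exact hv (by simp [hF, h])
        obtain ⟨u, hadj, hu1, _⟩ := hf'.2 v hv0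
        exact ⟨u, by simp [hF]; omega, hadj⟩
      have h1 : Fintype.card W ≤ F.card := by
        have := aux_dom_lower ht hdom
        rwa [Set.ncard_coe_finset] at this
      have h2 : F.card ≤ ∑ v, f' v := by
        calc F.card = ∑ _v ∈ F, 1 := Finset.card_eq_sum_ones F
          _ ≤ ∑ v ∈ F, f' v := Finset.sum_le_sum (by
              intro v hv
              simp only [hF, Finset.mem_filter] at hv
              omega)
          _ ≤ ∑ v, f' v := Finset.sum_le_sum_of_subset (Finset.filter_subset _ _)
      omega
  · apply le_antisymm
    · exact Nat.sInf_le ⟨S0, hS0sec, hS0card⟩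
    · refine le_csInf ⟨Fintype.card W, S0, hS0sec, hS0card⟩ ?_
      rintro n ⟨S, hS, rfl⟩
      exact aux_dom_lower ht hS.1
end

section
/- For integers t ≥ 2 and t' ≥ 2, γ_s(K_t □ K_{1,t'-1}) = t', where K_{1,t'-1} is the star with t'−1 leaves. -/
open Finset

variable {V : Type*}

/-- The star `K_{1,t-1}` on `t` vertices: vertex `0` is adjacent to all others. -/
def starGraph (t : ℕ) : SimpleGraph (Fin t) :=
  SimpleGraph.fromRel (fun a _ => (a : ℕ) = 0)

lemma star_adj_iff (t t' : ℕ) (x y : Fin t × Fin t') :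
    ((SimpleGraph.completeGraph (Fin t)).boxProd (starGraph t')).Adj x y ↔
      (x.1 ≠ y.1 ∧ x.2 = y.2) ∨ (x.2 ≠ y.2 ∧ ((x.2 : ℕ) = 0 ∨ (y.2 : ℕ) = 0) ∧ x.1 = y.1) := by
  simp only [SimpleGraph.boxProd_adj, SimpleGraph.completeGraph, SimpleGraph.top_adj, starGraph,
    SimpleGraph.fromRel_adj, ne_eq]
  tauto

lemma star_lower (t t' : ℕ) (ht : 2 ≤ t) (ht' : 2 ≤ t')
    (S : Set (Fin t × Fin t'))
    (hS : SecureDominating ((SimpleGraph.completeGraph (Fin t)).boxProd (starGraph t')) S) :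
    t' ≤ S.ncard := by
  classical
  by_contra hlt
  push_neg at hlt
  have htpos : 0 < t := by omega
  have ht'pos : 0 < t' := by omega
  set z : Fin t := ⟨0, htpos⟩ with hzdef
  set z' : Fin t' := ⟨0, ht'pos⟩ with hz'def
  have hval : ∀ j : Fin t', (j : ℕ) = 0 ↔ j = z' := by
    intro j; rw [Fin.ext_iff]
  set F : Finset (Fin t × Fin t') := S.toFinset with hF
  have hFS : ∀ p : Fin t × Fin t', p ∈ F ↔ p ∈ S := fun p => Set.mem_toFinset
  have hcard : F.card = S.ncard := (Set.ncard_eq_toFinset_card' S).symm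
  set T : Finset (Fin t') := F.image Prod.snd with hT
  have hTcard : T.card ≤ S.ncard := le_trans Finset.card_image_le (le_of_eq hcard)
  have hempty : ∀ j, j ∉ T → ∀ p ∈ S, p.2 ≠ j := by
    intro j hj p hp hpj
    exact hj (Finset.mem_image.mpr ⟨p, (hFS p).mpr hp, hpj⟩)
  have hmemT : ∀ j, j ∈ T → ∃ p ∈ S, p.2 = j := by
    intro j hj
    obtain ⟨p, hp, hpj⟩ := Finset.mem_image.mp hj
    exact ⟨p, (hFS p).mp hp, hpj⟩
  by_cases hall : ∀ j : Fin t', j ≠ z' → ∃ p ∈ S, p.2 = j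
  · -- Case B: every nonzero column is hit; whole set has size t'-1, column z' empty
    have hz'empty : ∀ p ∈ S, p.2 ≠ z' := by
      intro p hp hpz
      -- show z' ∉ T : otherwise T = univ
      have hTuniv : ∀ j, j ∈ T := by
        intro j
        by_cases hj : j = z'
        · exact hj ▸ Finset.mem_image.mpr ⟨p, (hFS p).mpr hp, hpz⟩
        · obtain ⟨q, hq, hqj⟩ := hall j hj
          exact Finset.mem_image.mpr ⟨q, (hFS q).mpr hq, hqj⟩
      have : (univ : Finset (Fin t')) ⊆ T := fun j _ => hTuniv j
      have := Finset.card_le_card this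
      rw [Finset.card_univ, Fintype.card_fin] at this
      omega
    have hsub : (univ : Finset (Fin t')).erase z' ⊆ T := by
      intro j hj
      obtain ⟨p, hp, hpj⟩ := hall j (Finset.ne_of_mem_erase hj)
      exact Finset.mem_image.mpr ⟨p, (hFS p).mpr hp, hpj⟩
    have h1 : t' - 1 ≤ T.card := by
      have := Finset.card_le_card hsub
      rwa [Finset.card_erase_of_mem (Finset.mem_univ _), Finset.card_univ,
        Fintype.card_fin] at this
    have hTF : T.card = F.card := by
      have := Finset.card_image_le (s := F) (f := Prod.snd)
      omega
    have hinj : Set.InjOn Prod.snd (↑F : Set (Fin t × Fin t')) :=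
      Finset.injOn_of_card_image_eq hTF
    -- the secure condition at v = (z, z')
    have hvS : ((z, z') : Fin t × Fin t') ∉ S := fun h => hz'empty _ h rfl
    obtain ⟨u, huS, hadj, hdom⟩ := hS.2 _ hvS
    rw [star_adj_iff] at hadj
    have hu : u.1 = z ∧ u.2 ≠ z' := by
      rcases hadj with ⟨_, h2⟩ | ⟨h1, _, h3⟩
      · exact absurd h2 (hz'empty u huS)
      · exact ⟨h3, h1⟩
    set a' : Fin t := ⟨1, by omega⟩ with ha'
    have hza' : z ≠ a' := by simp [hzdef, ha', Fin.ext_iff]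
    have hwS : ((a', u.2) : Fin t × Fin t') ∉ S := by
      intro h
      have : ((a', u.2) : Fin t × Fin t') = u :=
        hinj (Finset.mem_coe.mpr ((hFS _).mpr h)) (Finset.mem_coe.mpr ((hFS _).mpr huS)) rfl
      have := congrArg Prod.fst this
      simp only at this
      rw [this] at hza'
      exact hza' hu.1.symm
    have hwS' : ((a', u.2) : Fin t × Fin t') ∉ (S \ {u}) ∪ {(z, z')} := by
      rintro (⟨h, _⟩ | h)
      · exact hwS h
      · exact hu.2 ((Prod.ext_iff.mp h).2)
    obtain ⟨x, hx, hxadj⟩ := hdom _ hwS'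
    rw [star_adj_iff] at hxadj
    rcases hx with ⟨hxS, hxu⟩ | hx
    · rcases hxadj with ⟨_, h2⟩ | ⟨_, hor, h3⟩
      · exact hxu (hinj (Finset.mem_coe.mpr ((hFS _).mpr hxS))
          (Finset.mem_coe.mpr ((hFS _).mpr huS)) h2)
      · rcases hor with h | h
        · exact hz'empty x hxS ((hval _).mp h)
        · exact hu.2 ((hval _).mp h)
    · rw [Set.mem_singleton_iff] at hx
      subst hx
      rcases hxadj with ⟨_, h2⟩ | ⟨_, _, h3⟩
      · exact hu.2 h2.symm
      · exact hza' h3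
  · -- Case A: some nonzero column j is empty
    push_neg at hall
    obtain ⟨j, hjz, hjcol⟩ := hall
    -- the whole column z' is in S
    have hcol0 : ∀ a : Fin t, ((a, z') : Fin t × Fin t') ∈ S := by
      intro a
      have hv : ((a, j) : Fin t × Fin t') ∉ S := fun h => hjcol _ h rfl
      obtain ⟨u, huS, hadj⟩ := hS.1 _ hv
      rw [star_adj_iff] at hadj
      rcases hadj with ⟨_, h2⟩ | ⟨h1, hor, h3⟩
      · exact absurd h2 (hjcol u huS)
      · have hu2 : u.2 = z' := by
          rcases hor with h | h
          · exact (hval _).mp h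
          · exact absurd ((hval _).mp h) hjz
        have : u = (a, z') := Prod.ext_iff.mpr ⟨h3, hu2⟩
        rwa [this] at huS
    -- counting: another empty nonzero column j' exists
    set F0 : Finset (Fin t × Fin t') := F.filter (fun p => p.2 = z') with hF0
    set F1 : Finset (Fin t × Fin t') := F.filter (fun p => ¬ p.2 = z') with hF1
    have hsplit : F0.card + F1.card = F.card :=
      Finset.card_filter_add_card_filter_not _
    have h0 : t ≤ F0.card := by
      have hsub : (univ : Finset (Fin t)).image (fun a => ((a, z') : Fin t × Fin t')) ⊆ F0 := by
        intro p hp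
        obtain ⟨a, _, rfl⟩ := Finset.mem_image.mp hp
        exact Finset.mem_filter.mpr ⟨(hFS _).mpr (hcol0 a), rfl⟩
      have := Finset.card_le_card hsub
      rwa [Finset.card_image_of_injective _
        (fun a b h => (Prod.ext_iff.mp h).1), Finset.card_univ, Fintype.card_fin] at this
    have hTsub : T ⊆ insert z' (F1.image Prod.snd) := by
      intro j'' hj''
      obtain ⟨p, hp, rfl⟩ := Finset.mem_image.mp hj''
      by_cases h : p.2 = z'
      · rw [h]; exact Finset.mem_insert_self _ _
      · exact Finset.mem_insert_of_mem (Finset.mem_image.mpr ⟨p, Finset.mem_filter.mpr ⟨hp, h⟩, rfl⟩)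
    have hTle : T.card ≤ F1.card + 1 := by
      calc T.card ≤ (insert z' (F1.image Prod.snd)).card := Finset.card_le_card hTsub
        _ ≤ (F1.image Prod.snd).card + 1 := Finset.card_insert_le _ _
        _ ≤ F1.card + 1 := by
            have := Finset.card_image_le (s := F1) (f := Prod.snd)
            omega
    have hcompl : 2 ≤ ((univ : Finset (Fin t')) \ T).card := by
      have hg : ((univ : Finset (Fin t')) \ T).card = t' - T.card := by
        rw [Finset.card_sdiff_of_subset (Finset.subset_univ T), Finset.card_univ, Fintype.card_fin]
      omega
    have hjT : j ∉ T := by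
      intro h
      obtain ⟨p, hp, hpj⟩ := hmemT j h
      exact hjcol p hp hpj
    obtain ⟨j', hj'mem, hj'j⟩ := Finset.exists_mem_ne (s := (univ : Finset (Fin t')) \ T) (by omega) j
    have hj'T : j' ∉ T := (Finset.mem_sdiff.mp hj'mem).2
    have hz'T : z' ∈ T := Finset.mem_image.mpr ⟨(z, z'), (hFS _).mpr (hcol0 z), rfl⟩
    have hj'z : j' ≠ z' := fun h => hj'T (h ▸ hz'T)
    have hj'col : ∀ p ∈ S, p.2 ≠ j' := hempty j' hj'T
    -- secure condition at v = (z, j)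
    have hvS : ((z, j) : Fin t × Fin t') ∉ S := fun h => hjcol _ h rfl
    obtain ⟨u, huS, hadj, hdom⟩ := hS.2 _ hvS
    rw [star_adj_iff] at hadj
    have hu : u = (z, z') := by
      rcases hadj with ⟨_, h2⟩ | ⟨h1, hor, h3⟩
      · exact absurd h2 (hjcol u huS)
      · refine Prod.ext_iff.mpr ⟨h3, ?_⟩
        rcases hor with h | h
        · exact (hval _).mp h
        · exact absurd ((hval _).mp h) hjz
    have hwS' : ((z, j') : Fin t × Fin t') ∉ (S \ {u}) ∪ {(z, j)} := by
      rintro (⟨h, _⟩ | h)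
      · exact hj'col _ h rfl
      · exact hj'j ((Prod.ext_iff.mp h).2)
    obtain ⟨x, hx, hxadj⟩ := hdom _ hwS'
    rw [star_adj_iff] at hxadj
    rcases hx with ⟨hxS, hxu⟩ | hx
    · rcases hxadj with ⟨_, h2⟩ | ⟨_, hor, h3⟩
      · exact hj'col x hxS h2
      · have hx2 : x.2 = z' := by
          rcases hor with h | h
          · exact (hval _).mp h
          · exact absurd ((hval _).mp h) hj'z
        exact hxu (hu ▸ Prod.ext_iff.mpr ⟨h3, hx2⟩)
    · rw [Set.mem_singleton_iff] at hx
      subst hx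
      rcases hxadj with ⟨h1, _⟩ | ⟨_, hor, _⟩
      · exact h1 rfl
      · rcases hor with h | h
        · exact hjz ((hval _).mp h)
        · exact hj'z ((hval _).mp h)

lemma star_upper (t t' : ℕ) (ht : 2 ≤ t) (ht' : 2 ≤ t') :
    ∃ S : Set (Fin t × Fin t'),
      SecureDominating ((SimpleGraph.completeGraph (Fin t)).boxProd (starGraph t')) S ∧ S.ncard = t' := by
  have htpos : 0 < t := by omega
  set z : Fin t := ⟨0, htpos⟩ with hz
  refine ⟨{p | p.1 = z}, ⟨?_, ?_⟩, ?_⟩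
  · intro v hv
    refine ⟨(z, v.2), rfl, ?_⟩
    rw [star_adj_iff]
    exact Or.inl ⟨fun h => hv h.symm, rfl⟩
  · intro v hv
    have hv1 : v.1 ≠ z := hv
    refine ⟨(z, v.2), rfl, ?_, ?_⟩
    · rw [star_adj_iff]; exact Or.inl ⟨fun h => hv h.symm, rfl⟩
    · intro w hw
      have hw2 : w ≠ v := fun h => hw (Or.inr h)
      have hw1 : w.1 = z → w = (z, v.2) := by
        intro h; by_contra hne; exact hw (Or.inl ⟨h, hne⟩)
      by_cases h2 : w.2 = v.2
      · -- dominated by v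
        have hne : v.1 ≠ w.1 := by
          intro h
          exact hw2 (Prod.ext_iff.mpr ⟨h.symm, h2⟩)
        exact ⟨v, Or.inr rfl, by rw [star_adj_iff]; exact Or.inl ⟨hne, h2.symm⟩⟩
      · -- dominated by (z, w.2)
        have hwz : w.1 ≠ z := by
          intro h
          exact h2 ((Prod.ext_iff.mp (hw1 h)).2)
        refine ⟨(z, w.2), Or.inl ⟨rfl, ?_⟩, ?_⟩
        · intro h; exact h2 ((Prod.ext_iff.mp h).2)
        · rw [star_adj_iff]; exact Or.inl ⟨fun h => hwz h.symm, rfl⟩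
  · have : {p : Fin t × Fin t' | p.1 = z} = (fun j => (z, j)) '' Set.univ := by
      ext p
      simp only [Set.mem_setOf_eq, Set.image_univ, Set.mem_range]
      constructor
      · intro h; exact ⟨p.2, Prod.ext_iff.mpr ⟨h.symm, rfl⟩⟩
      · rintro ⟨j, rfl⟩; rfl
    rw [this, Set.ncard_image_of_injective _ (fun a b h => congrArg Prod.snd h),
      Set.ncard_univ, Nat.card_eq_fintype_card, Fintype.card_fin]

theorem stmt19 (t t' : ℕ) (ht : 2 ≤ t) (ht' : 2 ≤ t') :
    secDomNum ((SimpleGraph.completeGraph (Fin t)).boxProd (starGraph t')) = t' := by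
  have hmem : t' ∈ {n | ∃ S : Set (Fin t × Fin t'),
      SecureDominating ((SimpleGraph.completeGraph (Fin t)).boxProd (starGraph t')) S ∧ S.ncard = n} :=
    star_upper t t' ht ht'
  refine le_antisymm (Nat.sInf_le hmem) (le_csInf ⟨t', hmem⟩ ?_)
  rintro n ⟨S, hSD, rfl⟩
  exact star_lower t t' ht ht' S hSD
end
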